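/- arXiv:1812.06967 — 11 statements merged into one kernel-verified Lean document; each statement's English description precedes it below -/
import Mathlib

section
/- Crossing Lemma: Let p ∈ (0,1) and let V₀ and V₁ be real-valued functions differentiable at p such that V₀ satisfies the ODE (V_a0) at p, V₁ satisfies the ODE (V_a1) at p, and V₀(p) = V₁(p). Then V₀′(p) − V₁′(p) = ((λ + 2ρ)/(λ·p·(1−p)))·(V₀(p) − U^S(p)). In particular, if V₀(p) = V₁(p) > U^S(p) then V₀′(p) > V₁′(p), and if V₀(p) = V₁(p) = U^S(p) then V₀′(p) = V₁′(p). -/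
noncomputable section

/-- Stationary value `U^S(p) = (λ(p u_r^R + (1-p) u_ℓ^L) - 2c)/(2ρ + λ)`. -/
def US (urR ulR urL ulL lam rho c p : ℝ) : ℝ :=
  (lam * (p * urR + (1 - p) * ulL) - 2 * c) / (2 * rho + lam)

/-- Crossing Lemma: if `V₀` solves (V_a0) at `p`, `V₁` solves (V_a1) at `p`, and they
coincide at `p`, then the difference in derivatives is proportional to the gap with the
stationary value `U^S(p)`. -/
theorem crossing_lemma
    (urR ulR urL ulL lam rho c : ℝ)
    (h_urR : urR > max 0 ulR) (h_ulL : ulL > max 0 urL)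
    (h_lam : 0 < lam) (h_rho : 0 ≤ rho) (h_c : 0 ≤ c)
    (h_nz : rho ≠ 0 ∨ c ≠ 0)
    (p : ℝ) (hp : p ∈ Set.Ioo (0 : ℝ) 1)
    (V0 V1 : ℝ → ℝ)
    (hV0 : DifferentiableAt ℝ V0 p) (hV1 : DifferentiableAt ℝ V1 p)
    (ode0 : c + rho * V0 p
      = lam * (1 - p) * (ulL - V0 p) + lam * p * (1 - p) * deriv V0 p)
    (ode1 : c + rho * V1 p
      = lam * p * (urR - V1 p) - lam * p * (1 - p) * deriv V1 p)
    (heq : V0 p = V1 p) :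
    deriv V0 p - deriv V1 p
      = ((lam + 2 * rho) / (lam * p * (1 - p)))
          * (V0 p - US urR ulR urL ulL lam rho c p)
    ∧ (US urR ulR urL ulL lam rho c p < V0 p → deriv V1 p < deriv V0 p)
    ∧ (V0 p = US urR ulR urL ulL lam rho c p → deriv V0 p = deriv V1 p) := by
  obtain ⟨hp0, hp1⟩ := hp
  have hpp : 0 < lam * p * (1 - p) :=
    mul_pos (mul_pos h_lam hp0) (by linarith)
  have hden : 0 < 2 * rho + lam := by linarith
  have key : deriv V0 p - deriv V1 p
      = ((lam + 2 * rho) / (lam * p * (1 - p)))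
          * (V0 p - US urR ulR urL ulL lam rho c p) := by
    rw [US, div_mul_eq_mul_div, eq_div_iff hpp.ne']
    field_simp
    linear_combination (-(2*rho+lam))*(ode0 + ode1) + (-(2*rho+lam))*(rho + lam*p)*heq
  refine ⟨key, ?_, ?_⟩
  · intro h
    have : 0 < ((lam + 2 * rho) / (lam * p * (1 - p)))
        * (V0 p - US urR ulR urL ulL lam rho c p) := by
      apply mul_pos (div_pos (by linarith) hpp); linarith
    linarith [key]
  · intro h
    have : V0 p - US urR ulR urL ulL lam rho c p = 0 := by linarith
    rw [this, mul_zero] at key; linarith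
end
end

section
/- Unimprovability Lemma: Let p ∈ (0,1) and let V be a real-valued function differentiable at p. (a) If V satisfies the ODE (V_a0) at p and V(p) ≥ U^S(p), then for every α ∈ [0,1], F(α; p, V(p), V′(p)) ≤ c + ρ·V(p), with equality at α = 0; if moreover V(p) > U^S(p), the inequality is strict for every α ∈ (0,1]. (b) If V satisfies the ODE (V_a1) at p and V(p) ≥ U^S(p), then for every α ∈ [0,1], F(α; p, V(p), V′(p)) ≤ c + ρ·V(p), with equality at α = 1; if moreover V(p) > U^S(p), the inequality is strict for every α ∈ [0,1). -/
set_option linter.unusedVariables false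

noncomputable section

/-- `F(α; p, v, w)`: the flow payoff of attention choice `α` when the value is `v`
and its derivative is `w`. -/
def F (urR ulR urL ulL lam rho c : ℝ) (α p v w : ℝ) : ℝ :=
  α * lam * p * (urR - v) + (1 - α) * lam * (1 - p) * (ulL - v)
    - lam * (2 * α - 1) * p * (1 - p) * w

/-- Unimprovability Lemma. -/
theorem unimprovability
    (urR ulR urL ulL lam rho c : ℝ)
    (h_urR : urR > max 0 ulR) (h_ulL : ulL > max 0 urL)
    (h_lam : 0 < lam) (h_rho : 0 ≤ rho) (h_c : 0 ≤ c)
    (h_nz : rho ≠ 0 ∨ c ≠ 0)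
    (p : ℝ) (hp : p ∈ Set.Ioo (0 : ℝ) 1)
    (V : ℝ → ℝ) (hV : DifferentiableAt ℝ V p) :
    -- (a) if V solves (V_a0) at p and V(p) ≥ U^S(p)
    ((c + rho * V p = lam * (1 - p) * (ulL - V p) + lam * p * (1 - p) * deriv V p
        ∧ US urR ulR urL ulL lam rho c p ≤ V p) →
      ((∀ α ∈ Set.Icc (0 : ℝ) 1,
          F urR ulR urL ulL lam rho c α p (V p) (deriv V p) ≤ c + rho * V p)
        ∧ F urR ulR urL ulL lam rho c 0 p (V p) (deriv V p) = c + rho * V p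
        ∧ (US urR ulR urL ulL lam rho c p < V p →
            ∀ α ∈ Set.Ioc (0 : ℝ) 1,
              F urR ulR urL ulL lam rho c α p (V p) (deriv V p) < c + rho * V p)))
    ∧
    -- (b) if V solves (V_a1) at p and V(p) ≥ U^S(p)
    ((c + rho * V p = lam * p * (urR - V p) - lam * p * (1 - p) * deriv V p
        ∧ US urR ulR urL ulL lam rho c p ≤ V p) →
      ((∀ α ∈ Set.Icc (0 : ℝ) 1,
          F urR ulR urL ulL lam rho c α p (V p) (deriv V p) ≤ c + rho * V p)
        ∧ F urR ulR urL ulL lam rho c 1 p (V p) (deriv V p) = c + rho * V p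
        ∧ (US urR ulR urL ulL lam rho c p < V p →
            ∀ α ∈ Set.Ico (0 : ℝ) 1,
              F urR ulR urL ulL lam rho c α p (V p) (deriv V p) < c + rho * V p))) := by

  obtain ⟨hp0, hp1⟩ := hp
  have hlam2 : (0:ℝ) < 2 * rho + lam := by linarith
  have hUS : (2 * rho + lam) * US urR ulR urL ulL lam rho c p
      = lam * (p * urR + (1 - p) * ulL) - 2 * c := by
    unfold US; field_simp
  constructor
  · rintro ⟨hode, hge⟩
    have key : ∀ α : ℝ, F urR ulR urL ulL lam rho c α p (V p) (deriv V p)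
        = c + rho * V p + α * ((2 * rho + lam) * (US urR ulR urL ulL lam rho c p - V p)) := by
      intro α
      unfold F
      linear_combination (2 * α - 1) * hode - α * hUS
    have hD : (2 * rho + lam) * (US urR ulR urL ulL lam rho c p - V p) ≤ 0 := by
      nlinarith
    refine ⟨?_, ?_, ?_⟩
    · intro α ⟨h0, h1⟩
      rw [key]
      nlinarith [mul_nonpos_of_nonneg_of_nonpos h0 hD]
    · rw [key]; ring
    · intro hgt α ⟨h0, h1⟩
      rw [key]
      have hD' : (2 * rho + lam) * (US urR ulR urL ulL lam rho c p - V p) < 0 := by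
        nlinarith
      nlinarith [mul_neg_of_pos_of_neg h0 hD']
  · rintro ⟨hode, hge⟩
    have key : ∀ α : ℝ, F urR ulR urL ulL lam rho c α p (V p) (deriv V p)
        = c + rho * V p + (1 - α) * ((2 * rho + lam) * (US urR ulR urL ulL lam rho c p - V p)) := by
      intro α
      unfold F
      linear_combination (1 - 2 * α) * hode - (1 - α) * hUS
    have hD : (2 * rho + lam) * (US urR ulR urL ulL lam rho c p - V p) ≤ 0 := by
      nlinarith
    refine ⟨?_, ?_, ?_⟩
    · intro α ⟨h0, h1⟩
      rw [key]
      nlinarith [mul_nonpos_of_nonneg_of_nonpos (by linarith : (0:ℝ) ≤ 1 - α) hD]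
    · rw [key]; ring
    · intro hgt α ⟨h0, h1⟩
      rw [key]
      have hD' : (2 * rho + lam) * (US urR ulR urL ulL lam rho c p - V p) < 0 := by
        nlinarith
      nlinarith [mul_neg_of_pos_of_neg (by linarith : (0:ℝ) < 1 - α) hD']
end
end

section
/- If condition (EXP) holds, i.e. U^FA(p̂) > U(p̂), then the cutoff beliefs are ordered as 0 < p̲* < p̂ < p̄* < 1. -/
set_option linter.unusedVariables false

noncomputable section

def Ur (urR ulR urL ulL lam rho c p : ℝ) : ℝ := p * urR + (1 - p) * urL

def Ul (urR ulR urL ulL lam rho c p : ℝ) : ℝ := p * ulR + (1 - p) * ulL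

def U (urR ulR urL ulL lam rho c p : ℝ) : ℝ :=
  max (Ur urR ulR urL ulL lam rho c p) (Ul urR ulR urL ulL lam rho c p)

/-- Full-attention value `U^FA(p)`. -/
def UFA (urR ulR urL ulL lam rho c p : ℝ) : ℝ :=
  (lam * (p * urR + (1 - p) * ulL) - c) / (rho + lam)

/-- Lower boundary of the experimentation region. -/
def plowStar (urR ulR urL ulL lam rho c : ℝ) : ℝ :=
  (ulL * rho + c) / (rho * (ulL - ulR) + (urR - ulR) * lam)

/-- Upper boundary of the experimentation region. -/
def phighStar (urR ulR urL ulL lam rho c : ℝ) : ℝ :=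
  ((ulL - urL) * lam - urL * rho - c) / (rho * (urR - urL) + (ulL - urL) * lam)

/-- The belief at which `U_r` and `U_ℓ` cross. -/
def phat (urR ulR urL ulL lam rho c : ℝ) : ℝ :=
  (ulL - urL) / ((urR - ulR) + (ulL - urL))

/-- If (EXP) holds, i.e. `U^FA(p̂) > U(p̂)`, then `0 < p̲* < p̂ < p̄* < 1`. -/
theorem cutoff_ordering_under_EXP
    (urR ulR urL ulL lam rho c : ℝ)
    (h_urR : urR > max 0 ulR) (h_ulL : ulL > max 0 urL)
    (h_lam : 0 < lam) (h_rho : 0 ≤ rho) (h_c : 0 ≤ c)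
    (h_nz : rho ≠ 0 ∨ c ≠ 0)
    (h_EXP : UFA urR ulR urL ulL lam rho c (phat urR ulR urL ulL lam rho c)
      > U urR ulR urL ulL lam rho c (phat urR ulR urL ulL lam rho c)) :
    0 < plowStar urR ulR urL ulL lam rho c
    ∧ plowStar urR ulR urL ulL lam rho c < phat urR ulR urL ulL lam rho c
    ∧ phat urR ulR urL ulL lam rho c < phighStar urR ulR urL ulL lam rho c
    ∧ phighStar urR ulR urL ulL lam rho c < 1 := by
  obtain ⟨hr0, hrl⟩ := max_lt_iff.mp h_urR
  obtain ⟨hl0, hlr⟩ := max_lt_iff.mp h_ulL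
  have ha : 0 < urR - ulR := by linarith
  have hb : 0 < ulL - urL := by linarith
  have hs : 0 < (urR - ulR) + (ulL - urL) := by linarith
  have hrl2 : 0 < rho + lam := by linarith
  have hnum1 : 0 < ulL * rho + c := by
    rcases h_nz with h | h
    · have : 0 < rho := lt_of_le_of_ne h_rho (Ne.symm h)
      nlinarith
    · have : 0 < c := lt_of_le_of_ne h_c (Ne.symm h)
      nlinarith
  have hnum2 : 0 < rho * urR + c := by
    rcases h_nz with h | h
    · have : 0 < rho := lt_of_le_of_ne h_rho (Ne.symm h)
      nlinarith
    · have : 0 < c := lt_of_le_of_ne h_c (Ne.symm h)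
      nlinarith
  -- key inequality (E)
  have hE : rho * ((ulL - urL) * ulR + (urR - ulR) * ulL) + c * ((urR - ulR) + (ulL - urL))
      < lam * (urR - ulR) * (ulL - urL) := by
    have hU : Ul urR ulR urL ulL lam rho c (phat urR ulR urL ulL lam rho c)
        ≤ U urR ulR urL ulL lam rho c (phat urR ulR urL ulL lam rho c) := le_max_right _ _
    have h2 : Ul urR ulR urL ulL lam rho c (phat urR ulR urL ulL lam rho c)
        < UFA urR ulR urL ulL lam rho c (phat urR ulR urL ulL lam rho c) :=
      lt_of_le_of_lt hU h_EXP
    unfold Ul UFA phat at h2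
    rw [lt_div_iff₀ hrl2] at h2
    have h3 := mul_lt_mul_of_pos_right h2 hs
    have hs' : (urR - ulR) + (ulL - urL) ≠ 0 := ne_of_gt hs
    field_simp at h3
    nlinarith [h3]
  have hD1 : 0 < rho * (ulL - ulR) + (urR - ulR) * lam := by
    by_contra h
    push_neg at h
    nlinarith [hE, hb, hnum1, hs]
  have hD2 : 0 < rho * (urR - urL) + (ulL - urL) * lam := by
    by_contra h
    push_neg at h
    nlinarith [hE, ha, hnum2, hs]
  refine ⟨?_, ?_, ?_, ?_⟩
  · exact div_pos hnum1 hD1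
  · unfold plowStar phat
    rw [div_lt_div_iff₀ hD1 hs]
    nlinarith [hE]
  · unfold phat phighStar
    rw [div_lt_div_iff₀ hs hD2]
    nlinarith [hE]
  · unfold phighStar
    rw [div_lt_one hD2]
    nlinarith [hnum2]
end
end

section
/- Properties of the left own-biased branch: assume ρ > 0 and condition (EXP). Then the function V̲_own satisfies the ODE (V_a1) at every p ∈ (0,1); it satisfies value matching and smooth pasting at p̲*: V̲_own(p̲*) = U_ℓ(p̲*) and V̲_own′(p̲*) = u_ℓ^R − u_ℓ^L; V̲_own is strictly convex on (p̲*, 1]; and V̲_own(p) > U_ℓ(p) for every p ∈ (p̲*, 1]. -/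
set_option linter.unusedVariables false
set_option maxHeartbeats 1000000

noncomputable section

/-- Left branch of the own-biased value (for `ρ > 0`); since `ρ/λ > 0`, the real-power
formula automatically extends by continuity to `p = 1` with value `(u_r^R λ − c)/(λ+ρ)`. -/
def Vlown (urR ulR urL ulL lam rho c p : ℝ) : ℝ :=
  -(c / rho) * (1 - p) + ((urR * lam - c) / (lam + rho)) * p
    + (lam * (c + ulL * rho) / (rho * (lam + rho)))
      * (plowStar urR ulR urL ulL lam rho c
          / (1 - plowStar urR ulR urL ulL lam rho c)) ^ (rho / lam)
      * ((1 - p) / p) ^ (rho / lam) * (1 - p)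

lemma g_hasDerivAt (r : ℝ) {p : ℝ} (hp0 : 0 < p) (hp1 : p < 1) :
    HasDerivAt (fun q : ℝ => ((1 - q) / q) ^ r * (1 - q))
      (-(((1 - p) / p) ^ r) * ((r + p) / p)) p := by
  have hup : 0 < (1 - p) / p := div_pos (by linarith) hp0
  have hu : (1 - p) / p ≠ 0 := ne_of_gt hup
  have h1 : HasDerivAt (fun q : ℝ => 1 - q) (-1) p := by
    simpa using (hasDerivAt_id p).const_sub 1
  have hu' : HasDerivAt (fun q : ℝ => (1 - q) / q)
      ((-1 * p - (1 - p) * 1) / p ^ 2) p := h1.div (hasDerivAt_id p) (ne_of_gt hp0)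
  have hpow : HasDerivAt (fun q : ℝ => ((1 - q) / q) ^ r)
      (((-1 * p - (1 - p) * 1) / p ^ 2) * r * ((1 - p) / p) ^ (r - 1)) p :=
    hu'.rpow_const (Or.inl hu)
  have h := hpow.mul h1
  refine h.congr_deriv ?_
  have key : ((1 - p) / p) ^ r = ((1 - p) / p) ^ (r - 1) * ((1 - p) / p) := by
    rw [Real.rpow_sub_one hu]; exact (div_mul_cancel₀ _ hu).symm
  rw [key]
  generalize ((1 - p) / p) ^ (r - 1) = t
  field_simp
  ring

lemma g'_hasDerivAt (r : ℝ) {p : ℝ} (hp0 : 0 < p) (hp1 : p < 1) :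
    HasDerivAt (fun q : ℝ => -(((1 - q) / q) ^ r) * ((r + q) / q))
      (r * (r + 1) * ((1 - p) / p) ^ (r - 1) / p ^ 3) p := by
  have hup : 0 < (1 - p) / p := div_pos (by linarith) hp0
  have hu : (1 - p) / p ≠ 0 := ne_of_gt hup
  have h1 : HasDerivAt (fun q : ℝ => 1 - q) (-1) p := by
    simpa using (hasDerivAt_id p).const_sub 1
  have hu' : HasDerivAt (fun q : ℝ => (1 - q) / q)
      ((-1 * p - (1 - p) * 1) / p ^ 2) p := h1.div (hasDerivAt_id p) (ne_of_gt hp0)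
  have hpow : HasDerivAt (fun q : ℝ => -(((1 - q) / q) ^ r))
      (-(((-1 * p - (1 - p) * 1) / p ^ 2) * r * ((1 - p) / p) ^ (r - 1))) p :=
    (hu'.rpow_const (Or.inl hu)).neg
  have h2 : HasDerivAt (fun q : ℝ => (r + q) / q)
      ((1 * p - (r + p) * 1) / p ^ 2) p :=
    HasDerivAt.div (by simpa using (hasDerivAt_id p).const_add r) (hasDerivAt_id p)
      (ne_of_gt hp0)
  have h := hpow.mul h2
  refine h.congr_deriv ?_
  have key : ((1 - p) / p) ^ r = ((1 - p) / p) ^ (r - 1) * ((1 - p) / p) := by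
    rw [Real.rpow_sub_one hu]; exact (div_mul_cancel₀ _ hu).symm
  rw [key]
  generalize ((1 - p) / p) ^ (r - 1) = t
  field_simp
  ring

lemma g_continuousAt (r : ℝ) (hr : 0 < r) {p : ℝ} (hp0 : 0 < p) :
    ContinuousAt (fun q : ℝ => ((1 - q) / q) ^ r * (1 - q)) p := by
  have h1 : ContinuousAt (fun q : ℝ => (1 - q) / q) p :=
    ContinuousAt.div (by fun_prop) (by fun_prop) (ne_of_gt hp0)
  exact (h1.rpow_const (Or.inr hr.le)).mul (by fun_prop)

/-- Properties of the left own-biased branch: it solves ODE (V_a1) on `(0,1)`,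
value matching and smooth pasting hold at `p̲*`, it is strictly convex on `(p̲*, 1]`,
and it strictly exceeds `U_ℓ` on `(p̲*, 1]`. -/
theorem Vlown_properties
    (urR ulR urL ulL lam rho c : ℝ)
    (h_urR : urR > max 0 ulR) (h_ulL : ulL > max 0 urL)
    (h_lam : 0 < lam) (h_rho : 0 < rho) (h_c : 0 ≤ c)
    (h_EXP : UFA urR ulR urL ulL lam rho c (phat urR ulR urL ulL lam rho c)
      > U urR ulR urL ulL lam rho c (phat urR ulR urL ulL lam rho c)) :
    (∀ p ∈ Set.Ioo (0 : ℝ) 1,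
      DifferentiableAt ℝ (Vlown urR ulR urL ulL lam rho c) p
      ∧ c + rho * Vlown urR ulR urL ulL lam rho c p
          = lam * p * (urR - Vlown urR ulR urL ulL lam rho c p)
            - lam * p * (1 - p) * deriv (Vlown urR ulR urL ulL lam rho c) p)
    ∧ Vlown urR ulR urL ulL lam rho c (plowStar urR ulR urL ulL lam rho c)
        = Ul urR ulR urL ulL lam rho c (plowStar urR ulR urL ulL lam rho c)
    ∧ deriv (Vlown urR ulR urL ulL lam rho c) (plowStar urR ulR urL ulL lam rho c)
        = ulR - ulL
    ∧ StrictConvexOn ℝ (Set.Ioc (plowStar urR ulR urL ulL lam rho c) 1)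
        (Vlown urR ulR urL ulL lam rho c)
    ∧ ∀ p ∈ Set.Ioc (plowStar urR ulR urL ulL lam rho c) 1,
        Ul urR ulR urL ulL lam rho c p < Vlown urR ulR urL ulL lam rho c p := by
  have h0urR : (0:ℝ) < urR := (le_max_left 0 ulR).trans_lt h_urR
  have hulRurR : ulR < urR := (le_max_right 0 ulR).trans_lt h_urR
  have h0ulL : (0:ℝ) < ulL := (le_max_left 0 urL).trans_lt h_ulL
  have hurLulL : urL < ulL := (le_max_right 0 urL).trans_lt h_ulL
  have hlr : (0:ℝ) < lam + rho := by linarith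
  have hr : (0:ℝ) < rho / lam := div_pos h_rho h_lam
  -- phat facts
  have he : (0:ℝ) < (urR - ulR) + (ulL - urL) := by linarith
  have hph0 : 0 < phat urR ulR urL ulL lam rho c := by
    rw [phat]; exact div_pos (by linarith) he
  have hph1 : phat urR ulR urL ulL lam rho c < 1 := by
    rw [phat, div_lt_one he]; linarith
  have hUrUl : Ur urR ulR urL ulL lam rho c (phat urR ulR urL ulL lam rho c)
      = Ul urR ulR urL ulL lam rho c (phat urR ulR urL ulL lam rho c) := by
    simp only [Ur, Ul, phat]
    field_simp
    ring
  rw [U, hUrUl, max_self] at h_EXP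
  set q := phat urR ulR urL ulL lam rho c with hq
  have hN : (0:ℝ) < ulL * rho + c := by nlinarith
  have hkey : ulL * rho + c < q * (rho * (ulL - ulR) + (urR - ulR) * lam) := by
    simp only [UFA, Ul] at h_EXP
    rw [gt_iff_lt, lt_div_iff₀ (by linarith : (0:ℝ) < rho + lam)] at h_EXP
    nlinarith [h_EXP]
  have hD : (0:ℝ) < rho * (ulL - ulR) + (urR - ulR) * lam := by
    by_contra hcon
    push_neg at hcon
    nlinarith [mul_nonpos_of_nonneg_of_nonpos hph0.le hcon]
  set P := plowStar urR ulR urL ulL lam rho c with hP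
  have hP0 : 0 < P := by rw [hP, plowStar]; exact div_pos hN hD
  have hP1 : P < 1 := by
    rw [hP, plowStar, div_lt_one hD]
    nlinarith [mul_lt_of_lt_one_left hD hph1]
  have hP1' : (0:ℝ) < 1 - P := by linarith
  -- the constant C
  set C := lam * (c + ulL * rho) / (rho * (lam + rho)) * (P / (1 - P)) ^ (rho / lam)
    with hCdef
  have hApos : (0:ℝ) < (P / (1 - P)) ^ (rho / lam) :=
    Real.rpow_pos_of_pos (div_pos hP0 hP1') _
  have hC : 0 < C := by
    apply mul_pos _ hApos
    exact div_pos (by nlinarith) (mul_pos h_rho hlr)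
  have hAA : (P / (1 - P)) ^ (rho / lam) * ((1 - P) / P) ^ (rho / lam) = 1 := by
    rw [← Real.mul_rpow (div_pos hP0 hP1').le (div_pos hP1' hP0).le]
    rw [show P / (1 - P) * ((1 - P) / P) = 1 by field_simp]
    exact Real.one_rpow _
  have hCu : C * ((1 - P) / P) ^ (rho / lam)
      = lam * (c + ulL * rho) / (rho * (lam + rho)) := by
    rw [hCdef, mul_assoc, hAA, mul_one]
  -- the function rewritten
  have hVfun : Vlown urR ulR urL ulL lam rho c = fun p =>
      -(c / rho) * (1 - p) + ((urR * lam - c) / (lam + rho)) * p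
        + C * (((1 - p) / p) ^ (rho / lam) * (1 - p)) := by
    funext p
    simp only [Vlown, hCdef, ← hP]
    ring
  -- derivative
  have hderiv : ∀ p ∈ Set.Ioo (0:ℝ) 1, HasDerivAt (Vlown urR ulR urL ulL lam rho c)
      (c / rho + (urR * lam - c) / (lam + rho)
        + C * (-(((1 - p) / p) ^ (rho / lam)) * ((rho / lam + p) / p))) p := by
    intro p hp
    rw [hVfun]
    have ha : HasDerivAt (fun x : ℝ => -(c / rho) * (1 - x)) (c / rho) p := by
      have := ((hasDerivAt_id p).const_sub 1).const_mul (-(c / rho))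
      refine this.congr_deriv ?_
      ring
    have hb : HasDerivAt (fun x : ℝ => ((urR * lam - c) / (lam + rho)) * x)
        ((urR * lam - c) / (lam + rho)) p := by
      simpa using (hasDerivAt_id p).const_mul ((urR * lam - c) / (lam + rho))
    exact (ha.add hb).add ((g_hasDerivAt _ hp.1 hp.2).const_mul C)
  -- second derivative (of the first-derivative function)
  have hFd : ∀ p ∈ Set.Ioo (0:ℝ) 1, HasDerivAt
      (fun p => c / rho + (urR * lam - c) / (lam + rho)
        + C * (-(((1 - p) / p) ^ (rho / lam)) * ((rho / lam + p) / p)))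
      (C * (rho / lam * (rho / lam + 1) * ((1 - p) / p) ^ (rho / lam - 1) / p ^ 3)) p := by
    intro p hp
    exact ((g'_hasDerivAt _ hp.1 hp.2).const_mul C).const_add _
  have hF2pos : ∀ p ∈ Set.Ioo (0:ℝ) 1,
      0 < C * (rho / lam * (rho / lam + 1) * ((1 - p) / p) ^ (rho / lam - 1) / p ^ 3) := by
    intro p hp
    apply mul_pos hC
    apply div_pos _ (pow_pos hp.1 3)
    exact mul_pos (mul_pos hr (by linarith))
      (Real.rpow_pos_of_pos (div_pos (by linarith [hp.2]) hp.1) _)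
  -- continuity of V at positive points
  have hVcont : ∀ x : ℝ, 0 < x → ContinuousAt (Vlown urR ulR urL ulL lam rho c) x := by
    intro x hx
    rw [hVfun]
    exact ContinuousAt.add (by fun_prop)
      (continuousAt_const.mul (g_continuousAt _ hr hx))
  -- value matching
  have hVM : Vlown urR ulR urL ulL lam rho c P = Ul urR ulR urL ulL lam rho c P := by
    rw [hVfun]
    simp only [Ul]
    rw [show C * (((1 - P) / P) ^ (rho / lam) * (1 - P))
        = lam * (c + ulL * rho) / (rho * (lam + rho)) * (1 - P) by
      rw [← mul_assoc, hCu]]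
    rw [hP, plowStar]
    field_simp
    ring
  -- smooth pasting value
  have hFP : c / rho + (urR * lam - c) / (lam + rho)
      + C * (-(((1 - P) / P) ^ (rho / lam)) * ((rho / lam + P) / P)) = ulR - ulL := by
    rw [show C * (-(((1 - P) / P) ^ (rho / lam)) * ((rho / lam + P) / P))
        = -(C * ((1 - P) / P) ^ (rho / lam)) * ((rho / lam + P) / P) by ring, hCu]
    rw [hP, plowStar]
    have hN1 : rho * ulL + c ≠ 0 := by linarith
    have hN2 : c + rho * ulL ≠ 0 := by linarith
    have hD1 : rho * (ulL - ulR) + lam * (urR - ulR) ≠ 0 := by linarith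
    field_simp
    ring
  have hSP : deriv (Vlown urR ulR urL ulL lam rho c) P = ulR - ulL := by
    rw [(hderiv P ⟨hP0, hP1⟩).deriv]; exact hFP
  -- strict monotonicity of the derivative F on [P, 1)
  have hFmono : StrictMonoOn
      (fun p => c / rho + (urR * lam - c) / (lam + rho)
        + C * (-(((1 - p) / p) ^ (rho / lam)) * ((rho / lam + p) / p)))
      (Set.Ico P 1) := by
    apply strictMonoOn_of_deriv_pos (convex_Ico P 1)
    · intro x hx
      have hx01 : x ∈ Set.Ioo (0:ℝ) 1 := ⟨lt_of_lt_of_le hP0 hx.1, hx.2⟩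
      exact (hFd x hx01).continuousAt.continuousWithinAt
    · intro x hx
      rw [interior_Ico] at hx
      have hx01 : x ∈ Set.Ioo (0:ℝ) 1 := ⟨lt_trans hP0 hx.1, hx.2⟩
      rw [(hFd x hx01).deriv]
      exact hF2pos x hx01
  refine ⟨?_, hVM, hSP, ?_, ?_⟩
  · -- ODE
    intro p hp
    refine ⟨(hderiv p hp).differentiableAt, ?_⟩
    rw [(hderiv p hp).deriv, hVfun]
    simp only
    rw [hCdef]
    generalize (P / (1 - P)) ^ (rho / lam) = A
    generalize ((1 - p) / p) ^ (rho / lam) = t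
    have hp0 := hp.1
    field_simp
    ring
  · -- strict convexity
    apply strictConvexOn_of_deriv2_pos (convex_Ioc P 1)
    · intro x hx
      exact (hVcont x (lt_trans hP0 hx.1)).continuousWithinAt
    · intro x hx
      rw [interior_Ioc] at hx
      have hx01 : x ∈ Set.Ioo (0:ℝ) 1 := ⟨lt_trans hP0 hx.1, hx.2⟩
      have hiter : deriv^[2] (Vlown urR ulR urL ulL lam rho c) x
          = deriv (deriv (Vlown urR ulR urL ulL lam rho c)) x := by
        simp [Function.iterate_succ_apply']
      rw [hiter]
      have hE : deriv (Vlown urR ulR urL ulL lam rho c) =ᶠ[nhds x]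
          (fun p => c / rho + (urR * lam - c) / (lam + rho)
            + C * (-(((1 - p) / p) ^ (rho / lam)) * ((rho / lam + p) / p))) := by
        filter_upwards [isOpen_Ioo.mem_nhds hx01] with y hy
        exact (hderiv y hy).deriv
      rw [hE.deriv_eq, (hFd x hx01).deriv]
      exact hF2pos x hx01
  · -- dominance
    intro p hp
    have hmono : StrictMonoOn
        (fun p => Vlown urR ulR urL ulL lam rho c p - Ul urR ulR urL ulL lam rho c p)
        (Set.Icc P 1) := by
      apply strictMonoOn_of_deriv_pos (convex_Icc P 1)
      · intro x hx
        exact ContinuousWithinAt.sub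
          ((hVcont x (lt_of_lt_of_le hP0 hx.1)).continuousWithinAt)
          (Continuous.continuousWithinAt (by unfold Ul; fun_prop))
      · intro x hx
        rw [interior_Icc] at hx
        have hx01 : x ∈ Set.Ioo (0:ℝ) 1 := ⟨lt_trans hP0 hx.1, hx.2⟩
        have hUl : HasDerivAt (fun p => Ul urR ulR urL ulL lam rho c p) (ulR - ulL) x := by
          have := ((hasDerivAt_id x).mul_const ulR).add
            (((hasDerivAt_id x).const_sub 1).mul_const ulL)
          simp only [Ul]
          refine this.congr_deriv ?_
          ring
        have hdh := (hderiv x hx01).sub hUl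
        rw [HasDerivAt.deriv (f := fun p => Vlown urR ulR urL ulL lam rho c p
          - Ul urR ulR urL ulL lam rho c p) hdh]
        have := hFmono ⟨le_refl P, hP1⟩ ⟨hx.1.le, hx.2⟩ hx.1
        simp only at this
        rw [hFP] at this
        linarith
    have h1 := hmono ⟨le_refl P, hP1.le⟩ ⟨hp.1.le, hp.2⟩ hp.1
    simp only at h1
    rw [hVM] at h1
    linarith
end
end

section
/- Comparison of the left own-biased branch with the full-attention value: assume ρ > 0 and condition (EXP). Then V̲_own(p̲*) = U^FA(p̲*), V̲_own(1) = U^FA(1), and V̲_own(p) < U^FA(p) for every p ∈ (p̲*, 1). -/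
set_option linter.unusedVariables false

noncomputable section

/-- Generic form of the left own-biased branch, with an abstract cutoff `P`. -/
def Vgen (urR ulL lam rho c P p : ℝ) : ℝ :=
  -(c / rho) * (1 - p) + ((urR * lam - c) / (lam + rho)) * p
    + (lam * (c + ulL * rho) / (rho * (lam + rho)))
      * (P / (1 - P)) ^ (rho / lam)
      * ((1 - p) / p) ^ (rho / lam) * (1 - p)

theorem ident_aux (urR ulL lam rho c Bv Qv p : ℝ) (hrho : rho ≠ 0)
    (hlr : lam + rho ≠ 0) (hrl : rho + lam ≠ 0) :
    (lam * (p * urR + (1 - p) * ulL) - c) / (rho + lam)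
      - (-(c / rho) * (1 - p) + ((urR * lam - c) / (lam + rho)) * p
        + (lam * (c + ulL * rho) / (rho * (lam + rho))) * Bv * Qv * (1 - p))
    = (1 - p) * (lam * (c + ulL * rho) / (rho * (lam + rho))) * (1 - Bv * Qv) := by
  field_simp
  ring

theorem main_aux (urR ulR urL ulL lam rho c P : ℝ)
    (h_lam : 0 < lam) (h_rho : 0 < rho)
    (hP0 : 0 < P) (hP1 : P < 1) (hcr : 0 < c + ulL * rho) :
    Vgen urR ulL lam rho c P P = UFA urR ulR urL ulL lam rho c P
    ∧ Vgen urR ulL lam rho c P 1 = UFA urR ulR urL ulL lam rho c 1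
    ∧ ∀ p ∈ Set.Ioo P 1,
        Vgen urR ulL lam rho c P p < UFA urR ulR urL ulL lam rho c p := by
  have hrne : rho ≠ 0 := ne_of_gt h_rho
  have hlr : lam + rho ≠ 0 := by positivity
  have hrl : rho + lam ≠ 0 := by positivity
  have hr0 : 0 < rho / lam := div_pos h_rho h_lam
  have hP1' : 0 < 1 - P := by linarith
  have hA0pos : 0 < lam * (c + ulL * rho) / (rho * (lam + rho)) := by
    apply div_pos
    · nlinarith
    · nlinarith
  have hBnn : 0 ≤ P / (1 - P) := le_of_lt (div_pos hP0 hP1')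
  have identity : ∀ p : ℝ,
      UFA urR ulR urL ulL lam rho c p - Vgen urR ulL lam rho c P p
        = (1 - p) * (lam * (c + ulL * rho) / (rho * (lam + rho)))
            * (1 - (P / (1 - P)) ^ (rho / lam) * ((1 - p) / p) ^ (rho / lam)) := fun p =>
    ident_aux urR ulL lam rho c ((P / (1 - P)) ^ (rho / lam)) (((1 - p) / p) ^ (rho / lam))
      p hrne hlr hrl
  refine ⟨?_, ?_, ?_⟩
  · have h1 : (P / (1 - P)) ^ (rho / lam) * ((1 - P) / P) ^ (rho / lam) = 1 := by
      rw [← Real.mul_rpow hBnn (le_of_lt (div_pos hP1' hP0)), div_mul_div_comm,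
        mul_comm P (1 - P), div_self (by positivity), Real.one_rpow]
    have h2 := identity P
    rw [h1] at h2
    have h3 : (1 - P) * (lam * (c + ulL * rho) / (rho * (lam + rho))) * (1 - 1) = 0 := by ring
    linarith
  · have h2 := identity 1
    have h3 : (1 - (1:ℝ)) * (lam * (c + ulL * rho) / (rho * (lam + rho)))
        * (1 - (P / (1 - P)) ^ (rho / lam) * ((1 - 1) / 1) ^ (rho / lam)) = 0 := by ring
    linarith
  · rintro p ⟨hp1, hp2⟩
    have hp0 : 0 < p := lt_trans hP0 hp1
    have h1p : 0 < 1 - p := by linarith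
    have hbase : P / (1 - P) * ((1 - p) / p) < 1 := by
      rw [div_mul_div_comm, div_lt_one (by positivity)]
      nlinarith
    have hbnn : 0 ≤ P / (1 - P) * ((1 - p) / p) := by positivity
    have hlt : (P / (1 - P)) ^ (rho / lam) * ((1 - p) / p) ^ (rho / lam) < 1 := by
      rw [← Real.mul_rpow hBnn (by positivity)]
      exact Real.rpow_lt_one hbnn hbase hr0
    have h2 := identity p
    have hpos : 0 < (1 - p) * (lam * (c + ulL * rho) / (rho * (lam + rho)))
        * (1 - (P / (1 - P)) ^ (rho / lam) * ((1 - p) / p) ^ (rho / lam)) :=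
      mul_pos (mul_pos h1p hA0pos) (by linarith)
    linarith

/-- Comparison of the left own-biased branch with the full-attention value:
they coincide at `p̲*` and at `1`, and `V̲_own < U^FA` strictly in between. -/
theorem Vlown_vs_UFA
    (urR ulR urL ulL lam rho c : ℝ)
    (h_urR : urR > max 0 ulR) (h_ulL : ulL > max 0 urL)
    (h_lam : 0 < lam) (h_rho : 0 < rho) (h_c : 0 ≤ c)
    (h_EXP : UFA urR ulR urL ulL lam rho c (phat urR ulR urL ulL lam rho c)
      > U urR ulR urL ulL lam rho c (phat urR ulR urL ulL lam rho c)) :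
    Vlown urR ulR urL ulL lam rho c (plowStar urR ulR urL ulL lam rho c)
      = UFA urR ulR urL ulL lam rho c (plowStar urR ulR urL ulL lam rho c)
    ∧ Vlown urR ulR urL ulL lam rho c 1 = UFA urR ulR urL ulL lam rho c 1
    ∧ ∀ p ∈ Set.Ioo (plowStar urR ulR urL ulL lam rho c) 1,
        Vlown urR ulR urL ulL lam rho c p < UFA urR ulR urL ulL lam rho c p := by
  have hurR0 : 0 < urR := lt_of_le_of_lt (le_max_left 0 ulR) h_urR
  have hurRulR : ulR < urR := lt_of_le_of_lt (le_max_right 0 ulR) h_urR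
  have hulL0 : 0 < ulL := lt_of_le_of_lt (le_max_left 0 urL) h_ulL
  have hulLurL : urL < ulL := lt_of_le_of_lt (le_max_right 0 urL) h_ulL
  have hN0 : 0 < ulL - urL := by linarith
  have hM0 : 0 < (urR - ulR) + (ulL - urL) := by linarith
  have hNM : ulL - urL < (urR - ulR) + (ulL - urL) := by linarith
  have hph0 : 0 < (ulL - urL) / ((urR - ulR) + (ulL - urL)) := div_pos hN0 hM0
  have hph1 : (ulL - urL) / ((urR - ulR) + (ulL - urL)) < 1 := (div_lt_one hM0).2 hNM
  have hcr : 0 < c + rho * ulL := by nlinarith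
  have hkey : (ulL - urL) / ((urR - ulR) + (ulL - urL))
      * (rho * (ulL - ulR) + (urR - ulR) * lam) > c + rho * ulL := by
    have h := lt_of_le_of_lt
      (le_max_right (Ur urR ulR urL ulL lam rho c (phat urR ulR urL ulL lam rho c)) _) h_EXP
    unfold UFA Ul phat at h
    rw [lt_div_iff₀ (by linarith : (0:ℝ) < rho + lam)] at h
    nlinarith [h]
  have hD0 : 0 < rho * (ulL - ulR) + (urR - ulR) * lam := by
    nlinarith [hkey, hph0, hph1, hcr]
  have hPeq : plowStar urR ulR urL ulL lam rho c
      = (c + rho * ulL) / (rho * (ulL - ulR) + (urR - ulR) * lam) := by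
    unfold plowStar; ring_nf
  have hP0 : 0 < plowStar urR ulR urL ulL lam rho c := by
    rw [hPeq]; exact div_pos hcr hD0
  have hP1 : plowStar urR ulR urL ulL lam rho c < 1 := by
    rw [hPeq]
    calc (c + rho * ulL) / (rho * (ulL - ulR) + (urR - ulR) * lam)
        < (ulL - urL) / ((urR - ulR) + (ulL - urL)) := by
          rw [div_lt_iff₀ hD0]; linarith [hkey]
      _ < 1 := hph1
  have hcr' : 0 < c + ulL * rho := by nlinarith
  exact main_aux urR ulR urL ulL lam rho c (plowStar urR ulR urL ulL lam rho c)
    h_lam h_rho hP0 hP1 hcr'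
end
end

section
/- Properties of the opposite-biased value: assume ρ > 0. Then V̲_opp satisfies the ODE (V_a0) at every p ∈ (0,1) and V̄_opp satisfies the ODE (V_a1) at every p ∈ (0,1); value matching and smooth pasting hold at p*: V̲_opp(p*) = V̄_opp(p*) = U^S(p*) and V̲_opp′(p*) = V̄_opp′(p*) = λ(u_r^R − u_ℓ^L)/(2ρ + λ); both V̲_opp and V̄_opp are strictly convex on (0,1); and the function V_opp defined by V_opp(p) = V̲_opp(p) for p ≤ p* and V_opp(p) = V̄_opp(p) for p ≥ p* satisfies V_opp(p) > U^S(p) for every p ∈ [0,1] with p ≠ p*. -/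
set_option linter.unusedVariables false

noncomputable section

/-- The absorbing belief `p*`. -/
def pstar (urR ulR urL ulL lam rho c : ℝ) : ℝ :=
  (ulL * rho + c) / ((urR * rho + c) + (ulL * rho + c))

/-- Left branch of the opposite-biased value (for `ρ > 0`); since `ρ/λ > 0`, the real-power
formula automatically extends by continuity to `p = 0` with value `(u_ℓ^L λ − c)/(λ+ρ)`. -/
def Vlopp (urR ulR urL ulL lam rho c p : ℝ) : ℝ :=
  -(c / rho) * p + ((ulL * lam - c) / (lam + rho)) * (1 - p)
    + (lam / (rho * (2 * rho + lam))) * (lam * (urR * rho + c) / (lam + rho))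
      * (((1 - pstar urR ulR urL ulL lam rho c) / pstar urR ulR urL ulL lam rho c)
          * (p / (1 - p))) ^ (rho / lam) * p

/-- Right branch of the opposite-biased value (for `ρ > 0`); extends by continuity to
`p = 1` with value `(u_r^R λ − c)/(λ+ρ)`. -/
def Vhopp (urR ulR urL ulL lam rho c p : ℝ) : ℝ :=
  -(c / rho) * (1 - p) + ((urR * lam - c) / (lam + rho)) * p
    + (lam / (rho * (2 * rho + lam))) * (lam * (ulL * rho + c) / (lam + rho))
      * ((pstar urR ulR urL ulL lam rho c / (1 - pstar urR ulR urL ulL lam rho c))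
          * ((1 - p) / p)) ^ (rho / lam) * (1 - p)

/-- generic branch function -/
def Fb (a b K C r : ℝ) (p : ℝ) : ℝ :=
  a * p + b * (1 - p) + K * (C * (p / (1 - p))) ^ r * p

def Fb' (a b K C r : ℝ) (p : ℝ) : ℝ :=
  a - b + K * (C * (p / (1 - p))) ^ r * ((r + 1 - p) / (1 - p))

def Fb'' (K C r : ℝ) (p : ℝ) : ℝ :=
  K * (C * (p / (1 - p))) ^ r * (r * (r + 1) / (p * (1 - p) ^ 2))

lemma reflect_hasDerivAt {f : ℝ → ℝ} {d p : ℝ} (h : HasDerivAt f d (1 - p)) :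
    HasDerivAt (fun x => f (1 - x)) (-d) p := by
  have h2 : HasDerivAt (fun x : ℝ => 1 - x) (-1) p := by
    simpa using (hasDerivAt_id p).const_sub 1
  have h3 := h.comp p h2
  simp only [mul_neg, mul_one] at h3
  exact h3

lemma Fb_hasDerivAt (a b K C r : ℝ) (hC : 0 < C) (hr : 0 < r) {p : ℝ}
    (hp0 : 0 < p) (hp1 : p < 1) :
    HasDerivAt (Fb a b K C r) (Fb' a b K C r p) p := by
  have h1p : (0:ℝ) < 1 - p := by linarith
  have hu : 0 < C * (p / (1 - p)) := mul_pos hC (div_pos hp0 h1p)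
  have hdiv : HasDerivAt (fun x : ℝ => x / (1 - x))
      ((1 * (1 - p) - p * (0 - 1)) / (1 - p) ^ 2) p :=
    (hasDerivAt_id' p).div ((hasDerivAt_const p 1).sub (hasDerivAt_id' p)) h1p.ne'
  have hu' : HasDerivAt (fun x : ℝ => C * (x / (1 - x)))
      (C * ((1 * (1 - p) - p * (0 - 1)) / (1 - p) ^ 2)) p := hdiv.const_mul C
  have hX : HasDerivAt (fun x : ℝ => (C * (x / (1 - x))) ^ r)
      (r * (C * (p / (1 - p))) ^ (r - 1) * (C * ((1 * (1 - p) - p * (0 - 1)) / (1 - p) ^ 2))) p :=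
    by
      have h3 := hu'.rpow_const (p := r) (Or.inl hu.ne')
      convert h3 using 1
      ring
  have hmain : HasDerivAt (fun x : ℝ => a * x + b * (1 - x) + K * (C * (x / (1 - x))) ^ r * x)
      (a * 1 + b * (0 - 1)
        + ((K * (r * (C * (p / (1 - p))) ^ (r - 1)
              * (C * ((1 * (1 - p) - p * (0 - 1)) / (1 - p) ^ 2)))) * p
            + (K * (C * (p / (1 - p))) ^ r) * 1)) p :=
    (((hasDerivAt_id' p).const_mul a).add
      (((hasDerivAt_const p 1).sub (hasDerivAt_id' p)).const_mul b)).add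
      ((hX.const_mul K).mul (hasDerivAt_id' p))
  have : Fb a b K C r = fun x : ℝ => a * x + b * (1 - x) + K * (C * (x / (1 - x))) ^ r * x := rfl
  rw [this]
  convert hmain using 1
  rw [Fb', Real.rpow_sub_one hu.ne']
  field_simp
  ring

lemma Fb'_hasDerivAt (a b K C r : ℝ) (hC : 0 < C) (hr : 0 < r) {p : ℝ}
    (hp0 : 0 < p) (hp1 : p < 1) :
    HasDerivAt (Fb' a b K C r) (Fb'' K C r p) p := by
  have h1p : (0:ℝ) < 1 - p := by linarith
  have hu : 0 < C * (p / (1 - p)) := mul_pos hC (div_pos hp0 h1p)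
  have hdiv : HasDerivAt (fun x : ℝ => x / (1 - x))
      ((1 * (1 - p) - p * (0 - 1)) / (1 - p) ^ 2) p :=
    (hasDerivAt_id' p).div ((hasDerivAt_const p 1).sub (hasDerivAt_id' p)) h1p.ne'
  have hu' : HasDerivAt (fun x : ℝ => C * (x / (1 - x)))
      (C * ((1 * (1 - p) - p * (0 - 1)) / (1 - p) ^ 2)) p := hdiv.const_mul C
  have hX : HasDerivAt (fun x : ℝ => (C * (x / (1 - x))) ^ r)
      (r * (C * (p / (1 - p))) ^ (r - 1) * (C * ((1 * (1 - p) - p * (0 - 1)) / (1 - p) ^ 2))) p :=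
    by
      have h3 := hu'.rpow_const (p := r) (Or.inl hu.ne')
      convert h3 using 1
      ring
  have hw : HasDerivAt (fun x : ℝ => (r + 1 - x) / (1 - x))
      (((0 - 1) * (1 - p) - (r + 1 - p) * (0 - 1)) / (1 - p) ^ 2) p :=
    ((hasDerivAt_const p (r + 1)).sub (hasDerivAt_id' p)).div
      ((hasDerivAt_const p 1).sub (hasDerivAt_id' p)) h1p.ne'
  have hmain : HasDerivAt
      (fun x : ℝ => a - b + K * (C * (x / (1 - x))) ^ r * ((r + 1 - x) / (1 - x)))
      (0 + ((K * (r * (C * (p / (1 - p))) ^ (r - 1)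
              * (C * ((1 * (1 - p) - p * (0 - 1)) / (1 - p) ^ 2)))) * ((r + 1 - p) / (1 - p))
            + (K * (C * (p / (1 - p))) ^ r)
              * (((0 - 1) * (1 - p) - (r + 1 - p) * (0 - 1)) / (1 - p) ^ 2))) p :=
    (hasDerivAt_const p (a - b)).add ((hX.const_mul K).mul hw)
  have : Fb' a b K C r
      = fun x : ℝ => a - b + K * (C * (x / (1 - x))) ^ r * ((r + 1 - x) / (1 - x)) := rfl
  rw [this]
  convert hmain using 1
  rw [Fb'', Real.rpow_sub_one hu.ne']
  field_simp
  ring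

lemma Fb''_pos (K C r : ℝ) (hK : 0 < K) (hC : 0 < C) (hr : 0 < r) {p : ℝ}
    (hp0 : 0 < p) (hp1 : p < 1) : 0 < Fb'' K C r p := by
  have h1p : (0:ℝ) < 1 - p := by linarith
  have hu : 0 < C * (p / (1 - p)) := mul_pos hC (div_pos hp0 h1p)
  have ht := Real.rpow_pos_of_pos hu r
  exact mul_pos (mul_pos hK ht)
    (div_pos (mul_pos hr (by linarith)) (mul_pos hp0 (pow_pos h1p 2)))

lemma strictConvexOn_of_two (f f1 f2 : ℝ → ℝ)
    (h1 : ∀ x ∈ Set.Ioo (0:ℝ) 1, HasDerivAt f (f1 x) x)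
    (h2 : ∀ x ∈ Set.Ioo (0:ℝ) 1, HasDerivAt f1 (f2 x) x)
    (hpos : ∀ x ∈ Set.Ioo (0:ℝ) 1, 0 < f2 x) :
    StrictConvexOn ℝ (Set.Ioo (0:ℝ) 1) f := by
  apply strictConvexOn_of_deriv2_pos (convex_Ioo 0 1)
  · exact fun x hx => ((h1 x hx).differentiableAt).continuousAt.continuousWithinAt
  · intro x hx
    rw [interior_Ioo] at hx
    have hev : deriv f =ᶠ[nhds x] f1 :=
      Filter.eventuallyEq_of_mem (Ioo_mem_nhds hx.1 hx.2) (fun y hy => (h1 y hy).deriv)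
    have h2' : deriv^[2] f x = deriv (deriv f) x := rfl
    rw [h2', hev.deriv_eq, (h2 x hx).deriv]
    exact hpos x hx

lemma Fb_ode (u c lam rho K C : ℝ) (hlam : 0 < lam) (hrho : 0 < rho) {p : ℝ}
    (hp0 : 0 < p) (hp1 : p < 1) :
    c + rho * Fb (-(c/rho)) ((u * lam - c) / (lam + rho)) K C (rho/lam) p
      = lam * (1 - p) * (u - Fb (-(c/rho)) ((u * lam - c) / (lam + rho)) K C (rho/lam) p)
        + lam * p * (1 - p) * Fb' (-(c/rho)) ((u * lam - c) / (lam + rho)) K C (rho/lam) p := by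
  have h1p : (0:ℝ) < 1 - p := by linarith
  have hlr : (0:ℝ) < lam + rho := by linarith
  simp only [Fb, Fb']
  set t := (C * (p / (1 - p))) ^ (rho / lam) with ht
  field_simp
  ring

set_option maxHeartbeats 1600000 in
/-- Properties of the opposite-biased value: the branches solve (V_a0) and (V_a1) on
`(0,1)`, value matching and smooth pasting with `U^S` hold at `p*`, both branches are
strictly convex on `(0,1)`, and the combined value strictly exceeds `U^S` off `p*`. -/
theorem Vopp_properties
    (urR ulR urL ulL lam rho c : ℝ)
    (h_urR : urR > max 0 ulR) (h_ulL : ulL > max 0 urL)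
    (h_lam : 0 < lam) (h_rho : 0 < rho) (h_c : 0 ≤ c) :
    (∀ p ∈ Set.Ioo (0 : ℝ) 1,
      DifferentiableAt ℝ (Vlopp urR ulR urL ulL lam rho c) p
      ∧ c + rho * Vlopp urR ulR urL ulL lam rho c p
          = lam * (1 - p) * (ulL - Vlopp urR ulR urL ulL lam rho c p)
            + lam * p * (1 - p) * deriv (Vlopp urR ulR urL ulL lam rho c) p
      ∧ DifferentiableAt ℝ (Vhopp urR ulR urL ulL lam rho c) p
      ∧ c + rho * Vhopp urR ulR urL ulL lam rho c p
          = lam * p * (urR - Vhopp urR ulR urL ulL lam rho c p)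
            - lam * p * (1 - p) * deriv (Vhopp urR ulR urL ulL lam rho c) p)
    ∧ Vlopp urR ulR urL ulL lam rho c (pstar urR ulR urL ulL lam rho c)
        = US urR ulR urL ulL lam rho c (pstar urR ulR urL ulL lam rho c)
    ∧ Vhopp urR ulR urL ulL lam rho c (pstar urR ulR urL ulL lam rho c)
        = US urR ulR urL ulL lam rho c (pstar urR ulR urL ulL lam rho c)
    ∧ deriv (Vlopp urR ulR urL ulL lam rho c) (pstar urR ulR urL ulL lam rho c)
        = lam * (urR - ulL) / (2 * rho + lam)
    ∧ deriv (Vhopp urR ulR urL ulL lam rho c) (pstar urR ulR urL ulL lam rho c)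
        = lam * (urR - ulL) / (2 * rho + lam)
    ∧ StrictConvexOn ℝ (Set.Ioo (0 : ℝ) 1) (Vlopp urR ulR urL ulL lam rho c)
    ∧ StrictConvexOn ℝ (Set.Ioo (0 : ℝ) 1) (Vhopp urR ulR urL ulL lam rho c)
    ∧ ∀ p ∈ Set.Icc (0 : ℝ) 1, p ≠ pstar urR ulR urL ulL lam rho c →
        US urR ulR urL ulL lam rho c p
          < (if p ≤ pstar urR ulR urL ulL lam rho c then
              Vlopp urR ulR urL ulL lam rho c p
            else Vhopp urR ulR urL ulL lam rho c p) := by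
  have h_urR0 : 0 < urR := lt_of_le_of_lt (le_max_left 0 ulR) h_urR
  have h_ulL0 : 0 < ulL := lt_of_le_of_lt (le_max_left 0 urL) h_ulL
  have hA : 0 < urR * rho + c := by nlinarith
  have hB : 0 < ulL * rho + c := by nlinarith
  have hS : 0 < (urR * rho + c) + (ulL * rho + c) := by linarith
  have hlr : 0 < lam + rho := by linarith
  have h2rl : 0 < 2 * rho + lam := by linarith
  set pb := pstar urR ulR urL ulL lam rho c with hpb
  have hpb0 : 0 < pb := by rw [hpb, pstar]; exact div_pos hB hS
  have hpb1 : pb < 1 := by rw [hpb, pstar, div_lt_one hS]; linarith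
  have h1pb : 0 < 1 - pb := by linarith
  have hpbm : pb ∈ Set.Ioo (0:ℝ) 1 := ⟨hpb0, hpb1⟩
  have h1pbeq : 1 - pb = (urR * rho + c) / ((urR * rho + c) + (ulL * rho + c)) := by
    rw [hpb, pstar, eq_div_iff hS.ne']
    field_simp
    ring
  set aa := -(c / rho) with haae
  set bL := (ulL * lam - c) / (lam + rho) with hbLe
  set bH := (urR * lam - c) / (lam + rho) with hbHe
  set KL := lam / (rho * (2 * rho + lam)) * (lam * (urR * rho + c) / (lam + rho)) with hKLe
  set KH := lam / (rho * (2 * rho + lam)) * (lam * (ulL * rho + c) / (lam + rho)) with hKHe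
  set CL := (1 - pb) / pb with hCLe
  set CH := pb / (1 - pb) with hCHe
  set rr := rho / lam with hrre
  have hKL0 : 0 < KL := by
    rw [hKLe]
    exact mul_pos (div_pos h_lam (mul_pos h_rho h2rl)) (div_pos (mul_pos h_lam hA) hlr)
  have hKH0 : 0 < KH := by
    rw [hKHe]
    exact mul_pos (div_pos h_lam (mul_pos h_rho h2rl)) (div_pos (mul_pos h_lam hB) hlr)
  have hCL0 : 0 < CL := by rw [hCLe]; exact div_pos h1pb hpb0
  have hCH0 : 0 < CH := by rw [hCHe]; exact div_pos hpb0 h1pb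
  have hrr0 : 0 < rr := by rw [hrre]; exact div_pos h_rho h_lam
  have hb1L : CL * (pb / (1 - pb)) = 1 := by rw [hCLe]; field_simp
  have hb1H : CH * ((1 - pb) / pb) = 1 := by rw [hCHe]; field_simp
  have hVl : Vlopp urR ulR urL ulL lam rho c = Fb aa bL KL CL rr := by
    funext q
    rw [haae, hbLe, hKLe, hCLe, hrre]
    simp only [Vlopp, Fb, ← hpb]
  have hVh : Vhopp urR ulR urL ulL lam rho c
      = fun q => Fb aa bH KH CH rr (1 - q) := by
    funext q
    rw [haae, hbHe, hKHe, hCHe, hrre]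
    simp only [Vhopp, Fb, ← hpb]
    rw [show (1:ℝ) - (1 - q) = q from by ring]
  rw [hVl, hVh]
  beta_reduce
  have hmem' : ∀ p : ℝ, p ∈ Set.Ioo (0:ℝ) 1 → (1 - p) ∈ Set.Ioo (0:ℝ) 1 :=
    fun p hp => ⟨by linarith [hp.2], by linarith [hp.1]⟩
  have hFl : ∀ q ∈ Set.Ioo (0:ℝ) 1, HasDerivAt (Fb aa bL KL CL rr) (Fb' aa bL KL CL rr q) q :=
    fun q hq => Fb_hasDerivAt aa bL KL CL rr hCL0 hrr0 hq.1 hq.2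
  have hFl' : ∀ q ∈ Set.Ioo (0:ℝ) 1, HasDerivAt (Fb' aa bL KL CL rr) (Fb'' KL CL rr q) q :=
    fun q hq => Fb'_hasDerivAt aa bL KL CL rr hCL0 hrr0 hq.1 hq.2
  have hFh : ∀ q ∈ Set.Ioo (0:ℝ) 1, HasDerivAt (Fb aa bH KH CH rr) (Fb' aa bH KH CH rr q) q :=
    fun q hq => Fb_hasDerivAt aa bH KH CH rr hCH0 hrr0 hq.1 hq.2
  have hFh' : ∀ q ∈ Set.Ioo (0:ℝ) 1, HasDerivAt (Fb' aa bH KH CH rr) (Fb'' KH CH rr q) q :=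
    fun q hq => Fb'_hasDerivAt aa bH KH CH rr hCH0 hrr0 hq.1 hq.2
  have hGd : ∀ q ∈ Set.Ioo (0:ℝ) 1,
      HasDerivAt (fun x => Fb aa bH KH CH rr (1 - x)) (-(Fb' aa bH KH CH rr (1 - q))) q :=
    fun q hq => reflect_hasDerivAt (hFh (1 - q) (hmem' q hq))
  have hGd' : ∀ q ∈ Set.Ioo (0:ℝ) 1,
      HasDerivAt (fun x => -(Fb' aa bH KH CH rr (1 - x))) (Fb'' KH CH rr (1 - q)) q :=
    fun q hq => by
      have h3 := (reflect_hasDerivAt (hFh' (1 - q) (hmem' q hq))).neg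
      simp only [neg_neg] at h3
      exact h3
  -- value matching
  have hVML : Fb aa bL KL CL rr pb = US urR ulR urL ulL lam rho c pb := by
    simp only [Fb]
    rw [hb1L, Real.one_rpow]
    rw [haae, hbLe, hKLe, hpb]
    simp only [US, pstar]
    field_simp [h_rho.ne', h_lam.ne', hlr.ne', h2rl.ne', hS.ne', hA.ne', hB.ne']
    ring
  have hVMH : Fb aa bH KH CH rr (1 - pb) = US urR ulR urL ulL lam rho c pb := by
    simp only [Fb]
    rw [show (1:ℝ) - (1 - pb) = pb from by ring]
    rw [hb1H, Real.one_rpow]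
    rw [haae, hbHe, hKHe, h1pbeq, hpb]
    simp only [US, pstar]
    field_simp [h_rho.ne', h_lam.ne', hlr.ne', h2rl.ne', hS.ne', hA.ne', hB.ne']
    ring
  -- smooth pasting
  have hSPL : Fb' aa bL KL CL rr pb = lam * (urR - ulL) / (2 * rho + lam) := by
    simp only [Fb']
    rw [hb1L, Real.one_rpow]
    rw [hrre, haae, hbLe, hKLe, h1pbeq, hpb]
    simp only [pstar]
    field_simp [h_rho.ne', h_lam.ne', hlr.ne', h2rl.ne', hS.ne', hA.ne', hB.ne']
    ring
  have hSPH : -(Fb' aa bH KH CH rr (1 - pb)) = lam * (urR - ulL) / (2 * rho + lam) := by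
    simp only [Fb']
    rw [show (1:ℝ) - (1 - pb) = pb from by ring]
    rw [hb1H, Real.one_rpow]
    rw [hrre, haae, hbHe, hKHe, h1pbeq, hpb]
    simp only [pstar]
    field_simp [h_rho.ne', h_lam.ne', hlr.ne', h2rl.ne', hS.ne', hA.ne', hB.ne']
    ring
  -- the derivative of US
  have hUSd : ∀ q : ℝ, HasDerivAt (fun x => US urR ulR urL ulL lam rho c x)
      (lam * (urR - ulL) / (2 * rho + lam)) q := by
    intro q
    have h1 : HasDerivAt (fun x : ℝ => (lam * (x * urR + (1 - x) * ulL) - 2 * c) / (2 * rho + lam))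
        ((lam * (1 * urR + (0 - 1) * ulL) - 0) / (2 * rho + lam)) q :=
      (((((hasDerivAt_id' q).mul_const urR).add
          (((hasDerivAt_const q 1).sub (hasDerivAt_id' q)).mul_const ulL)).const_mul lam).sub
        (hasDerivAt_const q (2 * c))).div_const _
    have h2 : HasDerivAt (fun x => US urR ulR urL ulL lam rho c x)
        ((lam * (1 * urR + (0 - 1) * ulL) - 0) / (2 * rho + lam)) q := h1
    convert h2 using 1
    ring
  refine ⟨?_, hVML, hVMH, ?_, ?_, ?_, ?_, ?_⟩
  · -- the ODEs
    intro p hp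
    refine ⟨(hFl p hp).differentiableAt, ?_, (hGd p hp).differentiableAt, ?_⟩
    · rw [(hFl p hp).deriv]
      have h0 := Fb_ode ulL c lam rho KL CL h_lam h_rho hp.1 hp.2
      rw [← haae, ← hbLe, ← hrre] at h0
      linear_combination h0
    · rw [(hGd p hp).deriv]
      have h0 := Fb_ode urR c lam rho KH CH h_lam h_rho
        (show (0:ℝ) < 1 - p by linarith [hp.2]) (show (1:ℝ) - p < 1 by linarith [hp.1])
      rw [show (1:ℝ) - (1 - p) = p from by ring] at h0
      rw [← haae, ← hbHe, ← hrre] at h0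
      linear_combination h0
  · rw [(hFl pb hpbm).deriv]; exact hSPL
  · rw [(hGd pb hpbm).deriv]; exact hSPH
  · exact strictConvexOn_of_two _ _ _ hFl hFl'
      (fun x hx => Fb''_pos KL CL rr hKL0 hCL0 hrr0 hx.1 hx.2)
  · exact strictConvexOn_of_two _ _ _ hGd hGd'
      (fun x hx => Fb''_pos KH CH rr hKH0 hCH0 hrr0 (hmem' x hx).1 (hmem' x hx).2)
  · -- strict dominance
    have hLd : ∀ q ∈ Set.Ioo (0:ℝ) 1,
        HasDerivAt (fun x => Fb aa bL KL CL rr x - US urR ulR urL ulL lam rho c x)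
          (Fb' aa bL KL CL rr q - lam * (urR - ulL) / (2 * rho + lam)) q :=
      fun q hq => (hFl q hq).sub (hUSd q)
    have hLd' : ∀ q ∈ Set.Ioo (0:ℝ) 1,
        HasDerivAt (fun x => Fb' aa bL KL CL rr x - lam * (urR - ulL) / (2 * rho + lam))
          (Fb'' KL CL rr q) q :=
      fun q hq => (hFl' q hq).sub_const _
    have hHd : ∀ q ∈ Set.Ioo (0:ℝ) 1,
        HasDerivAt (fun x => Fb aa bH KH CH rr (1 - x) - US urR ulR urL ulL lam rho c x)
          (-(Fb' aa bH KH CH rr (1 - q)) - lam * (urR - ulL) / (2 * rho + lam)) q :=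
      fun q hq => (hGd q hq).sub (hUSd q)
    have hHd' : ∀ q ∈ Set.Ioo (0:ℝ) 1,
        HasDerivAt (fun x => -(Fb' aa bH KH CH rr (1 - x)) - lam * (urR - ulL) / (2 * rho + lam))
          (Fb'' KH CH rr (1 - q)) q :=
      fun q hq => (hGd' q hq).sub_const _
    have hLconv : StrictConvexOn ℝ (Set.Ioo (0:ℝ) 1)
        (fun x => Fb aa bL KL CL rr x - US urR ulR urL ulL lam rho c x) :=
      strictConvexOn_of_two _ _ _ hLd hLd'
        (fun x hx => Fb''_pos KL CL rr hKL0 hCL0 hrr0 hx.1 hx.2)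
    have hHconv : StrictConvexOn ℝ (Set.Ioo (0:ℝ) 1)
        (fun x => Fb aa bH KH CH rr (1 - x) - US urR ulR urL ulL lam rho c x) :=
      strictConvexOn_of_two _ _ _ hHd hHd'
        (fun x hx => Fb''_pos KH CH rr hKH0 hCH0 hrr0 (hmem' x hx).1 (hmem' x hx).2)
    intro p hp hne
    by_cases hle : p ≤ pb
    · rw [if_pos hle]
      have hlt : p < pb := lt_of_le_of_ne hle hne
      rcases eq_or_lt_of_le hp.1 with h0 | h0
      · -- p = 0
        rw [← h0]
        have hF0 : Fb aa bL KL CL rr 0 = bL := by simp [Fb]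
        rw [hF0, hbLe]
        simp only [US]
        rw [div_lt_div_iff₀ h2rl hlr]
        nlinarith [mul_pos h_lam hB]
      · -- 0 < p < pb
        have hpm : p ∈ Set.Ioo (0:ℝ) 1 := ⟨h0, lt_trans hlt hpb1⟩
        have hder0 : HasDerivAt
            (fun x => Fb aa bL KL CL rr x - US urR ulR urL ulL lam rho c x) 0 pb := by
          have h2 := hLd pb hpbm
          rw [hSPL] at h2
          simpa using h2
        have hs := hLconv.slope_lt_of_hasDerivAt hpm hpbm hlt hder0
        rw [slope_def_field] at hs
        have hzero : Fb aa bL KL CL rr pb - US urR ulR urL ulL lam rho c pb = 0 := by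
          rw [hVML]; ring
        rw [hzero] at hs
        have hd : 0 < pb - p := by linarith
        rw [div_lt_iff₀ hd] at hs
        nlinarith [hs]
    · rw [if_neg hle]
      have hgt : pb < p := not_le.1 hle
      rcases eq_or_lt_of_le hp.2 with h1 | h1
      · -- p = 1
        rw [h1]
        have hF1 : Fb aa bH KH CH rr (1 - 1) = bH := by norm_num [Fb]
        rw [hF1, hbHe]
        simp only [US]
        rw [div_lt_div_iff₀ h2rl hlr]
        nlinarith [mul_pos h_lam hA]
      · -- pb < p < 1
        have hpm : p ∈ Set.Ioo (0:ℝ) 1 := ⟨lt_trans hpb0 hgt, h1⟩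
        have hder0 : HasDerivAt
            (fun x => Fb aa bH KH CH rr (1 - x) - US urR ulR urL ulL lam rho c x) 0 pb := by
          have h2 := hHd pb hpbm
          rw [hSPH] at h2
          simpa using h2
        have hs := hHconv.lt_slope_of_hasDerivAt hpbm hpm hgt hder0
        rw [slope_def_field] at hs
        have hzero : Fb aa bH KH CH rr (1 - pb) - US urR ulR urL ulL lam rho c pb = 0 := by
          rw [hVMH]; ring
        rw [hzero] at hs
        have hd : 0 < p - pb := by linarith
        rw [lt_div_iff₀ hd] at hs
        nlinarith [hs]
end
end

section
/- Structure of the solution candidate, case (a): assume ρ > 0, condition (EXP), and max{V̲_own(p*), V̄_own(p*)} ≥ U^S(p*). Then there exists a unique p̌ ∈ (p̲*, p̄*) such that V̲_own(p̌) = V̄_own(p̌); moreover V̲_own(p) > V̄_own(p) for every p ∈ (p̲*, p̌) and V̲_own(p) < V̄_own(p) for every p ∈ (p̌, p̄*). -/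
set_option linter.unusedVariables false

noncomputable section

set_option maxHeartbeats 1000000

open Set Real

private lemma bern_pos {γ s : ℝ} (hγ : 0 < γ) (hs : 0 < s) (hne : s ≠ 1) :
    (1 + γ) * s - γ < s ^ (1 + γ) := by
  have h := one_add_mul_self_lt_rpow_one_add (s := s - 1) (p := 1 + γ)
    (by linarith) (fun h => hne (by linarith)) (by linarith)
  have e1 : (1 : ℝ) + (s - 1) = s := by ring
  have e2 : 1 + (1 + γ) * (s - 1) = (1 + γ) * s - γ := by ring
  rw [e1, e2] at h
  exact h

private lemma bern_neg {γ s : ℝ} (hγ : 0 < γ) (hs : 0 < s) (hne : s ≠ 1) :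
    (1 + γ) - γ * s < s ^ (-γ) := by
  have hsinv : (0:ℝ) < s⁻¹ := inv_pos.mpr hs
  have hne' : s⁻¹ ≠ 1 := fun h => hne (by
    have := congrArg (fun x => x⁻¹) h
    simpa using this)
  have h := bern_pos hγ hsinv hne'
  have h2 := mul_lt_mul_of_pos_right h hs
  have e1 : ((1 + γ) * s⁻¹ - γ) * s = (1 + γ) - γ * s := by field_simp
  have e2 : s⁻¹ ^ (1 + γ) * s = s ^ (-γ) := by
    rw [Real.inv_rpow hs.le, ← Real.rpow_neg hs.le]
    nth_rewrite 2 [← Real.rpow_one s]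
    rw [← Real.rpow_add hs]
    congr 1
    ring
  rw [e1, e2] at h2
  exact h2

private lemma strictAntiOn_glue {F F' : ℝ → ℝ} {a b x₀ : ℝ}
    (hc : ContinuousOn F (Icc a b))
    (hder : ∀ s ∈ Ioo a b, s ≠ x₀ → HasDerivAt F (F' s) s)
    (hneg : ∀ s ∈ Ioo a b, s ≠ x₀ → F' s < 0) :
    StrictAntiOn F (Icc a b) := by
  rcases le_or_gt b a with hba | hab
  · intro x hx y hy hxy
    exact absurd (hxy.trans_le (hy.2.trans hba)) (not_lt.mpr hx.1)
  set u := max a (min x₀ b) with hu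
  have hau : a ≤ u := le_max_left _ _
  have hub : u ≤ b := max_le hab.le (min_le_right _ _)
  have S1 : StrictAntiOn F (Icc a u) := by
    apply strictAntiOn_of_deriv_neg (convex_Icc a u)
      (hc.mono (Icc_subset_Icc le_rfl hub))
    intro x hx
    rw [interior_Icc] at hx
    have hxb : x ∈ Ioo a b := ⟨hx.1, lt_of_lt_of_le hx.2 hub⟩
    have hxne : x ≠ x₀ := by
      by_cases hcase : min x₀ b ≤ a
      · have : u = a := max_eq_left hcase
        rw [this] at hx
        exact absurd (hx.1.trans hx.2) (lt_irrefl a)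
      · push_neg at hcase
        have : u = min x₀ b := max_eq_right hcase.le
        have hxlt : x < x₀ := lt_of_lt_of_le hx.2 (this ▸ min_le_left x₀ b)
        exact ne_of_lt hxlt
    rw [(hder x hxb hxne).deriv]
    exact hneg x hxb hxne
  have S2 : StrictAntiOn F (Icc u b) := by
    apply strictAntiOn_of_deriv_neg (convex_Icc u b)
      (hc.mono (Icc_subset_Icc hau le_rfl))
    intro x hx
    rw [interior_Icc] at hx
    have hxb : x ∈ Ioo a b := ⟨lt_of_le_of_lt hau hx.1, hx.2⟩
    have hxne : x ≠ x₀ := by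
      by_cases hbx : b ≤ x₀
      · have : u = b := by
          rw [hu, min_eq_right hbx, max_eq_right hab.le]
        rw [this] at hx
        exact absurd (hx.1.trans hx.2) (lt_irrefl b)
      · push_neg at hbx
        have hux : x₀ ≤ u := by
          rw [hu, min_eq_left hbx.le]
          exact le_max_right _ _
        exact ne_of_gt (lt_of_le_of_lt hux hx.1)
    rw [(hder x hxb hxne).deriv]
    exact hneg x hxb hxne
  intro x hx y hy hxy
  by_cases h1 : y ≤ u
  · exact S1 ⟨hx.1, hxy.le.trans h1⟩ ⟨hy.1, h1⟩ hxy
  push_neg at h1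
  by_cases h2 : u ≤ x
  · exact S2 ⟨h2, hx.2⟩ ⟨h1.le.trans (le_refl y), hy.2⟩ hxy
  push_neg at h2
  have A : F u < F x := S1 ⟨hx.1, h2.le⟩ ⟨hau, le_rfl⟩ h2
  have B : F y < F u := S2 ⟨le_rfl, hub⟩ ⟨h1.le, hy.2⟩ h1
  linarith

private lemma single_cross {φ F w : ℝ → ℝ} {τl τh : ℝ} (hlh : τl < τh)
    (hw : ∀ s ∈ Ioo τl τh, 0 < w s)
    (hφF : ∀ s ∈ Ioo τl τh, φ s = w s * F s)
    (hanti : StrictAntiOn F (Icc τl τh))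
    (hcont : ContinuousOn F (Icc τl τh))
    (hFl : 0 < F τl) (hFh : F τh < 0) :
    ∃ s₀ ∈ Ioo τl τh, φ s₀ = 0 ∧ (∀ s ∈ Ioo τl τh, φ s = 0 → s = s₀) ∧
      (∀ s ∈ Ioo τl s₀, 0 < φ s) ∧ (∀ s ∈ Ioo s₀ τh, φ s < 0) := by
  have h0 : (0:ℝ) ∈ Ioo (F τh) (F τl) := ⟨hFh, hFl⟩
  obtain ⟨s₀, hs₀, hFs₀⟩ := intermediate_value_Ioo' hlh.le hcont h0
  refine ⟨s₀, hs₀, ?_, ?_, ?_, ?_⟩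
  · rw [hφF s₀ hs₀, hFs₀, mul_zero]
  · intro s hs hφs
    have hFs : F s = 0 := by
      have h := hφF s hs
      rw [hφs] at h
      rcases mul_eq_zero.mp h.symm with h' | h'
      · exact absurd h' (ne_of_gt (hw s hs))
      · exact h'
    by_contra hne
    rcases lt_or_gt_of_ne hne with h | h
    · have := hanti (mem_Icc_of_Ioo hs) (mem_Icc_of_Ioo hs₀) h
      rw [hFs, hFs₀] at this
      exact lt_irrefl 0 this
    · have := hanti (mem_Icc_of_Ioo hs₀) (mem_Icc_of_Ioo hs) h
      rw [hFs, hFs₀] at this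
      exact lt_irrefl 0 this
  · intro s hs
    have hs' : s ∈ Ioo τl τh := ⟨hs.1, hs.2.trans hs₀.2⟩
    have hpos : 0 < F s := by
      have := hanti (mem_Icc_of_Ioo hs') (mem_Icc_of_Ioo hs₀) hs.2
      rwa [hFs₀] at this
    rw [hφF s hs']
    exact mul_pos (hw s hs') hpos
  · intro s hs
    have hs' : s ∈ Ioo τl τh := ⟨hs₀.1.trans hs.1, hs.2⟩
    have hneg : F s < 0 := by
      have := hanti (mem_Icc_of_Ioo hs₀) (mem_Icc_of_Ioo hs') hs.1
      rwa [hFs₀] at this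
    rw [hφF s hs']
    exact mul_neg_of_pos_of_neg (hw s hs') hneg

private lemma core (γ τl τh : ℝ) (hγ : 0 < γ) (hl : 0 < τl) (hlh : τl < τh)
    (hmax : 1 / (2 * γ + 1) ≤ max (τl ^ γ) (τh ^ (-γ))) :
    ∃ s₀ ∈ Ioo τl τh,
      (s₀ - 1 + τl ^ γ * s₀ ^ (-γ) - τh ^ (-γ) * s₀ ^ (1 + γ) = 0) ∧
      (∀ s ∈ Ioo τl τh,
        s - 1 + τl ^ γ * s ^ (-γ) - τh ^ (-γ) * s ^ (1 + γ) = 0 → s = s₀) ∧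
      (∀ s ∈ Ioo τl s₀, 0 < s - 1 + τl ^ γ * s ^ (-γ) - τh ^ (-γ) * s ^ (1 + γ)) ∧
      (∀ s ∈ Ioo s₀ τh, s - 1 + τl ^ γ * s ^ (-γ) - τh ^ (-γ) * s ^ (1 + γ) < 0) := by
  have hh : 0 < τh := hl.trans hlh
  set P : ℝ := τl ^ γ with hPdef
  set Q : ℝ := τh ^ (-γ) with hQdef
  have hP : 0 < P := rpow_pos_of_pos hl γ
  have hQ : 0 < Q := rpow_pos_of_pos hh (-γ)
  have hgg : τl ^ γ < τh ^ γ := Real.rpow_lt_rpow hl.le hlh hγ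
  have hPQ : Q * τl ^ γ < 1 := by
    rw [hQdef, Real.rpow_neg hh.le]
    rw [inv_mul_eq_div, div_lt_one (rpow_pos_of_pos hh γ)]
    exact hgg
  have h2γ : (0:ℝ) < 2 * γ + 1 := by linarith
  set φ : ℝ → ℝ := fun s => s - 1 + P * s ^ (-γ) - Q * s ^ (1 + γ) with hφdef
  rcases le_max_iff.mp hmax with hPm | hQm
  · -- case P ≥ m : use F = s^(-γ) - s^(-γ-1) + P * s^(-2γ-1) - Q, w = s^(γ+1)
    have hPm' : 1 ≤ (2 * γ + 1) * P := by
      rw [div_le_iff₀ h2γ] at hPm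
      linarith [hPm]
    set F : ℝ → ℝ := fun s => s ^ (-γ) - s ^ (-γ - 1) + P * s ^ (-2 * γ - 1) - Q with hFdef
    set F' : ℝ → ℝ := fun s =>
      -γ * s ^ (-γ - 1) + (γ + 1) * s ^ (-γ - 2) - (2 * γ + 1) * P * s ^ (-2 * γ - 2) with hF'def
    have hder : ∀ s ∈ Ioo τl τh, s ≠ 1 → HasDerivAt F (F' s) s := by
      intro s hs hne
      have hs0 : 0 < s := hl.trans hs.1
      have h1 := Real.hasDerivAt_rpow_const (x := s) (p := -γ) (Or.inl hs0.ne')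
      have h2 := Real.hasDerivAt_rpow_const (x := s) (p := -γ - 1) (Or.inl hs0.ne')
      have h3 := Real.hasDerivAt_rpow_const (x := s) (p := -2 * γ - 1) (Or.inl hs0.ne')
      have hcomb := ((h1.sub h2).add (h3.const_mul P)).sub_const Q
      convert hcomb using 1
      · rfl
      · rfl
      · rfl
      rw [show -γ - 1 - 1 = -γ - 2 by ring, show -2 * γ - 1 - 1 = -2 * γ - 2 by ring,
        show -γ - 1 = -γ - 1 from rfl]
      ring
    have hneg : ∀ s ∈ Ioo τl τh, s ≠ 1 → F' s < 0 := by
      intro s hs hne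
      have hs0 : 0 < s := hl.trans hs.1
      have hbn := bern_neg hγ hs0 hne
      have hp1 : 0 < s ^ (-γ) := rpow_pos_of_pos hs0 _
      have h4 : (1 + γ) - γ * s < (2 * γ + 1) * P * s ^ (-γ) :=
        lt_of_lt_of_le hbn (le_mul_of_one_le_left hp1.le hPm')
      have hg : 0 < (2 * γ + 1) * P * s ^ (-γ) + γ * s - (γ + 1) := by linarith
      have hp2 : 0 < s ^ (-γ - 2) := rpow_pos_of_pos hs0 _
      have e1 : s ^ (-γ - 2) * s = s ^ (-γ - 1) := by
        nth_rewrite 2 [← Real.rpow_one s]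
        rw [← Real.rpow_add hs0]
        congr 1; ring
      have e2 : s ^ (-γ - 2) * s ^ (-γ) = s ^ (-2 * γ - 2) := by
        rw [← Real.rpow_add hs0]
        congr 1; ring
      have key : F' s = -(s ^ (-γ - 2) * ((2 * γ + 1) * P * s ^ (-γ) + γ * s - (γ + 1))) := by
        have expand : -(s ^ (-γ - 2) * ((2 * γ + 1) * P * s ^ (-γ) + γ * s - (γ + 1)))
            = -((2 * γ + 1) * P * (s ^ (-γ - 2) * s ^ (-γ)) + γ * (s ^ (-γ - 2) * s)
                - (γ + 1) * s ^ (-γ - 2)) := by ring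
        rw [expand, e1, e2, hF'def]
        ring
      rw [key]
      exact neg_lt_zero.mpr (mul_pos hp2 hg)
    have hcont : ContinuousOn F (Icc τl τh) := by
      intro s hs
      have hs0 : 0 < s := lt_of_lt_of_le hl hs.1
      have c1 := Real.continuousAt_rpow_const s (-γ) (Or.inl hs0.ne')
      have c2 := Real.continuousAt_rpow_const s (-γ - 1) (Or.inl hs0.ne')
      have c3 := Real.continuousAt_rpow_const s (-2 * γ - 1) (Or.inl hs0.ne')
      exact (((c1.sub c2).add (c3.const_mul P)).sub continuousAt_const).continuousWithinAt
    have hanti : StrictAntiOn F (Icc τl τh) := strictAntiOn_glue hcont hder hneg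
    have hFl : 0 < F τl := by
      have e : P * τl ^ (-2 * γ - 1) = τl ^ (-γ - 1) := by
        rw [hPdef, ← Real.rpow_add hl]
        congr 1; ring
      have hFval : F τl = τl ^ (-γ) - Q := by
        rw [hFdef]; simp only []
        rw [e]; ring
      rw [hFval, sub_pos, hQdef, Real.rpow_neg hh.le, Real.rpow_neg hl.le]
      exact inv_strictAnti₀ (rpow_pos_of_pos hl γ) hgg
    have hFh : F τh < 0 := by
      have e : τh ^ (-2 * γ - 1) = τh ^ (-γ) * τh ^ (-γ - 1) := by
        rw [← Real.rpow_add hh]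
        congr 1; ring
      have hFval : F τh = τh ^ (-γ - 1) * (P * τh ^ (-γ) - 1) := by
        rw [hFdef]; simp only []
        rw [hQdef, e]; ring
      rw [hFval]
      apply mul_neg_of_pos_of_neg (rpow_pos_of_pos hh _)
      rw [sub_neg]
      calc P * τh ^ (-γ) = τh ^ (-γ) * τl ^ γ := by rw [hPdef]; ring
        _ < 1 := by rw [← hQdef] at *; exact hPQ
    have hw : ∀ s ∈ Ioo τl τh, 0 < (fun s : ℝ => s ^ (γ + 1)) s := by
      intro s hs
      exact rpow_pos_of_pos (hl.trans hs.1) _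
    have hφF : ∀ s ∈ Ioo τl τh, φ s = (fun s : ℝ => s ^ (γ + 1)) s * F s := by
      intro s hs
      have hs0 : 0 < s := hl.trans hs.1
      have h1 : s ^ (γ + 1) * s ^ (-γ) = s := by
        rw [← Real.rpow_add hs0, show γ + 1 + -γ = 1 by ring, Real.rpow_one]
      have h2 : s ^ (γ + 1) * s ^ (-γ - 1) = 1 := by
        rw [← Real.rpow_add hs0, show γ + 1 + (-γ - 1) = 0 by ring, Real.rpow_zero]
      have h3 : s ^ (γ + 1) * s ^ (-2 * γ - 1) = s ^ (-γ) := by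
        rw [← Real.rpow_add hs0]
        congr 1; ring
      have h4 : s ^ (γ + 1) = s ^ (1 + γ) := by congr 1; ring
      calc φ s = s - 1 + P * s ^ (-γ) - Q * s ^ (1 + γ) := rfl
        _ = (s ^ (γ + 1) * s ^ (-γ)) - (s ^ (γ + 1) * s ^ (-γ - 1))
            + P * (s ^ (γ + 1) * s ^ (-2 * γ - 1)) - Q * s ^ (γ + 1) := by
            rw [h1, h2, h3, h4]
        _ = s ^ (γ + 1) * F s := by rw [hFdef]; ring
    exact single_cross hlh hw hφF hanti hcont hFl hFh
  · -- case Q ≥ m : use F = s^(γ+1) - s^γ + P - Q * s^(2γ+1), w = s^(-γ)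
    have hQm' : 1 ≤ (2 * γ + 1) * Q := by
      rw [div_le_iff₀ h2γ] at hQm
      linarith [hQm]
    set F : ℝ → ℝ := fun s => s ^ (γ + 1) - s ^ γ + P - Q * s ^ (2 * γ + 1) with hFdef
    set F' : ℝ → ℝ := fun s =>
      (γ + 1) * s ^ γ - γ * s ^ (γ - 1) - (2 * γ + 1) * Q * s ^ (2 * γ) with hF'def
    have hder : ∀ s ∈ Ioo τl τh, s ≠ 1 → HasDerivAt F (F' s) s := by
      intro s hs hne
      have hs0 : 0 < s := hl.trans hs.1
      have h1 := Real.hasDerivAt_rpow_const (x := s) (p := γ + 1) (Or.inl hs0.ne')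
      have h2 := Real.hasDerivAt_rpow_const (x := s) (p := γ) (Or.inl hs0.ne')
      have h3 := Real.hasDerivAt_rpow_const (x := s) (p := 2 * γ + 1) (Or.inl hs0.ne')
      have hcomb := ((h1.sub h2).add_const P).sub (h3.const_mul Q)
      convert hcomb using 1
      · rfl
      · rfl
      · rfl
      rw [show γ + 1 - 1 = γ by ring, show 2 * γ + 1 - 1 = 2 * γ by ring]
      ring
    have hneg : ∀ s ∈ Ioo τl τh, s ≠ 1 → F' s < 0 := by
      intro s hs hne
      have hs0 : 0 < s := hl.trans hs.1
      have hbp := bern_pos hγ hs0 hne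
      have hp1 : 0 < s ^ (γ - 1) := rpow_pos_of_pos hs0 _
      have hp2 : 0 < s ^ (1 + γ) := rpow_pos_of_pos hs0 _
      have e1 : s ^ (γ - 1) * s = s ^ γ := by
        nth_rewrite 2 [← Real.rpow_one s]
        rw [← Real.rpow_add hs0]
        congr 1; ring
      have e2 : s ^ (γ - 1) * s ^ (1 + γ) = s ^ (2 * γ) := by
        rw [← Real.rpow_add hs0]
        congr 1; ring
      have h4 : (γ + 1) * s ^ γ - γ * s ^ (γ - 1) < s ^ (2 * γ) := by
        have hmul := mul_lt_mul_of_pos_left hbp hp1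
        rw [e2] at hmul
        have expand : s ^ (γ - 1) * ((1 + γ) * s - γ)
            = (γ + 1) * (s ^ (γ - 1) * s) - γ * s ^ (γ - 1) := by ring
        rw [expand, e1] at hmul
        exact hmul
      have h5 : s ^ (2 * γ) ≤ (2 * γ + 1) * Q * s ^ (2 * γ) :=
        le_mul_of_one_le_left (rpow_pos_of_pos hs0 _).le hQm'
      have : F' s = (γ + 1) * s ^ γ - γ * s ^ (γ - 1) - (2 * γ + 1) * Q * s ^ (2 * γ) := rfl
      rw [this]
      linarith
    have hcont : ContinuousOn F (Icc τl τh) := by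
      intro s hs
      have hs0 : 0 < s := lt_of_lt_of_le hl hs.1
      have c1 := Real.continuousAt_rpow_const s (γ + 1) (Or.inl hs0.ne')
      have c2 := Real.continuousAt_rpow_const s γ (Or.inl hs0.ne')
      have c3 := Real.continuousAt_rpow_const s (2 * γ + 1) (Or.inl hs0.ne')
      exact (((c1.sub c2).add continuousAt_const).sub (c3.const_mul Q)).continuousWithinAt
    have hanti : StrictAntiOn F (Icc τl τh) := strictAntiOn_glue hcont hder hneg
    have hFl : 0 < F τl := by
      have e : τl ^ (2 * γ + 1) = τl ^ γ * τl ^ (γ + 1) := by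
        rw [← Real.rpow_add hl]
        congr 1; ring
      have hFval : F τl = τl ^ (γ + 1) * (1 - Q * τl ^ γ) := by
        rw [hFdef]; simp only []
        rw [hPdef, e]; ring
      rw [hFval]
      exact mul_pos (rpow_pos_of_pos hl _) (by linarith)
    have hFh : F τh < 0 := by
      have e : Q * τh ^ (2 * γ + 1) = τh ^ (γ + 1) := by
        rw [hQdef, ← Real.rpow_add hh]
        congr 1; ring
      have hFval : F τh = P - τh ^ γ := by
        rw [hFdef]; simp only []
        rw [e]; ring
      rw [hFval, hPdef]
      linarith
    have hw : ∀ s ∈ Ioo τl τh, 0 < (fun s : ℝ => s ^ (-γ)) s := by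
      intro s hs
      exact rpow_pos_of_pos (hl.trans hs.1) _
    have hφF : ∀ s ∈ Ioo τl τh, φ s = (fun s : ℝ => s ^ (-γ)) s * F s := by
      intro s hs
      have hs0 : 0 < s := hl.trans hs.1
      have h1 : s ^ (-γ) * s ^ (γ + 1) = s := by
        rw [← Real.rpow_add hs0, show -γ + (γ + 1) = 1 by ring, Real.rpow_one]
      have h2 : s ^ (-γ) * s ^ γ = 1 := by
        rw [← Real.rpow_add hs0, show -γ + γ = 0 by ring, Real.rpow_zero]
      have h3 : s ^ (-γ) * s ^ (2 * γ + 1) = s ^ (1 + γ) := by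
        rw [← Real.rpow_add hs0]
        congr 1; ring
      calc φ s = s - 1 + P * s ^ (-γ) - Q * s ^ (1 + γ) := rfl
        _ = (s ^ (-γ) * s ^ (γ + 1)) - (s ^ (-γ) * s ^ γ)
            + P * s ^ (-γ) - Q * (s ^ (-γ) * s ^ (2 * γ + 1)) := by
            rw [h1, h2, h3]
        _ = s ^ (-γ) * F s := by rw [hFdef]; ring
    exact single_cross hlh hw hφF hanti hcont hFl hFh


/-- Right branch of the own-biased value (for `ρ > 0`). -/
def Vhown (urR ulR urL ulL lam rho c p : ℝ) : ℝ :=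
  -(c / rho) * p + ((ulL * lam - c) / (lam + rho)) * (1 - p)
    + (lam * (c + urR * rho) / (rho * (lam + rho)))
      * ((1 - phighStar urR ulR urL ulL lam rho c)
          / phighStar urR ulR urL ulL lam rho c) ^ (rho / lam)
      * (p / (1 - p)) ^ (rho / lam) * p

/-- Structure of the solution candidate, case (a): if the own-biased value weakly exceeds
the stationary value at `p*`, the two own-biased branches cross exactly once in
`(p̲*, p̄*)`, with `V̲_own` above to the left and below to the right. -/
theorem candidate_structure_case_a
    (urR ulR urL ulL lam rho c : ℝ)
    (h_urR : urR > max 0 ulR) (h_ulL : ulL > max 0 urL)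
    (h_lam : 0 < lam) (h_rho : 0 < rho) (h_c : 0 ≤ c)
    (h_EXP : UFA urR ulR urL ulL lam rho c (phat urR ulR urL ulL lam rho c)
      > U urR ulR urL ulL lam rho c (phat urR ulR urL ulL lam rho c))
    (h_case : max (Vlown urR ulR urL ulL lam rho c (pstar urR ulR urL ulL lam rho c))
        (Vhown urR ulR urL ulL lam rho c (pstar urR ulR urL ulL lam rho c))
      ≥ US urR ulR urL ulL lam rho c (pstar urR ulR urL ulL lam rho c)) :
    ∃ pc ∈ Set.Ioo (plowStar urR ulR urL ulL lam rho c)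
        (phighStar urR ulR urL ulL lam rho c),
      Vlown urR ulR urL ulL lam rho c pc = Vhown urR ulR urL ulL lam rho c pc
      ∧ (∀ q ∈ Set.Ioo (plowStar urR ulR urL ulL lam rho c)
            (phighStar urR ulR urL ulL lam rho c),
          Vlown urR ulR urL ulL lam rho c q = Vhown urR ulR urL ulL lam rho c q → q = pc)
      ∧ (∀ q ∈ Set.Ioo (plowStar urR ulR urL ulL lam rho c) pc,
          Vhown urR ulR urL ulL lam rho c q < Vlown urR ulR urL ulL lam rho c q)
      ∧ (∀ q ∈ Set.Ioo pc (phighStar urR ulR urL ulL lam rho c),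
          Vlown urR ulR urL ulL lam rho c q < Vhown urR ulR urL ulL lam rho c q) := by
  obtain ⟨hurR0, hulRurR⟩ := max_lt_iff.mp h_urR
  obtain ⟨hulL0, hurLulL⟩ := max_lt_iff.mp h_ulL
  have hrl : (0:ℝ) < rho + lam := by linarith
  have hlr : (0:ℝ) < lam + rho := by linarith
  have h2rl : (0:ℝ) < 2 * rho + lam := by linarith
  have hR : (0:ℝ) < urR * rho + c := by nlinarith
  have hL : (0:ℝ) < ulL * rho + c := by nlinarith
  -- phat basics
  simp only [U] at h_EXP
  set pA := phat urR ulR urL ulL lam rho c with hpAdef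
  have hdh : (0:ℝ) < (urR - ulR) + (ulL - urL) := by linarith
  have hpA0 : 0 < pA := by
    rw [hpAdef, phat]; exact div_pos (by linarith) hdh
  have hpA1 : pA < 1 := by
    rw [hpAdef, phat, div_lt_one hdh]; linarith
  have hEXPl : Ul urR ulR urL ulL lam rho c pA < UFA urR ulR urL ulL lam rho c pA :=
    lt_of_le_of_lt (le_max_right _ _) h_EXP
  have hEXPr : Ur urR ulR urL ulL lam rho c pA < UFA urR ulR urL ulL lam rho c pA :=
    lt_of_le_of_lt (le_max_left _ _) h_EXP
  -- lower boundary
  have hnuml : 0 < pA * (rho * (ulL - ulR) + (urR - ulR) * lam) - (ulL * rho + c) := by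
    have h := sub_pos.mpr hEXPl
    have e : UFA urR ulR urL ulL lam rho c pA - Ul urR ulR urL ulL lam rho c pA
        = (pA * (rho * (ulL - ulR) + (urR - ulR) * lam) - (ulL * rho + c)) / (rho + lam) := by
      simp only [UFA, Ul]; field_simp; ring
    rw [e] at h
    rcases div_pos_iff.mp h with ⟨h1, _⟩ | ⟨_, h2⟩
    · exact h1
    · linarith
  have hdl : 0 < rho * (ulL - ulR) + (urR - ulR) * lam := by
    by_contra hcon
    push_neg at hcon
    nlinarith [mul_nonneg hpA0.le (neg_nonneg.mpr hcon)]
  set pl := plowStar urR ulR urL ulL lam rho c with hpldef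
  have hpl0 : 0 < pl := by
    rw [hpldef, plowStar]; exact div_pos hL hdl
  have hplpA : pl < pA := by
    rw [hpldef, plowStar, div_lt_iff₀ hdl]; linarith
  -- upper boundary
  have hnumr : 0 < ((ulL - urL) * lam - urL * rho - c)
      - pA * (rho * (urR - urL) + (ulL - urL) * lam) := by
    have h := sub_pos.mpr hEXPr
    have e : UFA urR ulR urL ulL lam rho c pA - Ur urR ulR urL ulL lam rho c pA
        = (((ulL - urL) * lam - urL * rho - c)
            - pA * (rho * (urR - urL) + (ulL - urL) * lam)) / (rho + lam) := by
      simp only [UFA, Ur]; field_simp; ring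
    rw [e] at h
    rcases div_pos_iff.mp h with ⟨h1, _⟩ | ⟨_, h2⟩
    · exact h1
    · linarith
  have hdr : 0 < rho * (urR - urL) + (ulL - urL) * lam := by
    by_contra hcon
    push_neg at hcon
    nlinarith [mul_nonneg (neg_nonneg.mpr hcon) (by linarith : (0:ℝ) ≤ 1 - pA)]
  set ph := phighStar urR ulR urL ulL lam rho c with hphdef
  have hph1 : ph < 1 := by
    rw [hphdef, phighStar, div_lt_one hdr]; nlinarith [hR]
  have hpAph : pA < ph := by
    rw [hphdef, phighStar, lt_div_iff₀ hdr]; linarith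
  have hplph : pl < ph := hplpA.trans hpAph
  have hph0 : 0 < ph := hpA0.trans hpAph
  have hpl1 : pl < 1 := hplpA.trans (hpAph.trans hph1)
  -- substitution map
  set R := urR * rho + c with hRdef
  set L := ulL * rho + c with hLdef
  set σ : ℝ → ℝ := fun p => R * p / (L * (1 - p)) with hσdef
  have hσpos : ∀ p : ℝ, 0 < p → p < 1 → 0 < σ p := by
    intro p h1 h2
    simp only [hσdef]
    exact div_pos (mul_pos hR h1) (mul_pos hL (by linarith))
  have hσmono : ∀ p q : ℝ, 0 < p → p < 1 → 0 < q → q < 1 → (σ p < σ q ↔ p < q) := by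
    intro p q hp hp1 hq hq1
    simp only [hσdef]
    rw [div_lt_div_iff₀ (mul_pos hL (by linarith)) (mul_pos hL (by linarith))]
    have e1 : R * p * (L * (1 - q)) = R * L * (p * (1 - q)) := by ring
    have e2 : R * q * (L * (1 - p)) = R * L * (q * (1 - p)) := by ring
    rw [e1, e2, mul_lt_mul_iff_right₀ (mul_pos hR hL)]
    constructor <;> intro h <;> nlinarith
  set γ := rho / lam with hγdef
  have hγ : (0:ℝ) < γ := div_pos h_rho h_lam
  set τl := σ pl with hτldef
  set τh := σ ph with hτhdef
  have hτl0 : 0 < τl := hσpos pl hpl0 hpl1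
  have hτlh : τl < τh := (hσmono pl ph hpl0 hpl1 hph0 hph1).mpr hplph
  -- pstar basics
  set ps := pstar urR ulR urL ulL lam rho c with hpsdef
  have hRL : 0 < R + L := by linarith
  have hps_eq : ps = L / (R + L) := by
    rw [hpsdef, pstar, ← hRdef, ← hLdef]
  have hps0 : 0 < ps := by rw [hps_eq]; exact div_pos hL hRL
  have hps1 : ps < 1 := by rw [hps_eq, div_lt_one hRL]; linarith
  have hσps : σ ps = 1 := by
    simp only [hσdef]
    rw [hps_eq]
    rw [div_eq_one_iff_eq]
    · field_simp
      ring
    · intro hcon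
      have h1 : 1 - L / (R + L) = R / (R + L) := by field_simp; ring
      rw [h1] at hcon
      have := mul_pos hL (div_pos hR hRL)
      linarith [hcon ▸ this]
  -- rpow collapse lemmas
  have h1pl : (0:ℝ) < 1 - pl := by linarith
  have h1ph : (0:ℝ) < 1 - ph := by linarith
  have col_l : ∀ p : ℝ, 0 < p → p < 1 →
      (pl / (1 - pl)) ^ γ * ((1 - p) / p) ^ γ = τl ^ γ * (σ p) ^ (-γ) := by
    intro p hp hp1
    have hσp := hσpos p hp hp1
    have h1 : (0:ℝ) ≤ pl / (1 - pl) := div_nonneg hpl0.le h1pl.le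
    have h2 : (0:ℝ) ≤ (1 - p) / p := div_nonneg (by linarith) hp.le
    rw [← Real.mul_rpow h1 h2, Real.rpow_neg hσp.le, ← Real.inv_rpow hσp.le,
      ← Real.mul_rpow hτl0.le (inv_nonneg.mpr hσp.le)]
    congr 1
    rw [hτldef]
    simp only [hσdef]
    have hne1 : (1:ℝ) - p ≠ 0 := ne_of_gt (by linarith)
    have hne2 : (1:ℝ) - pl ≠ 0 := ne_of_gt h1pl
    field_simp
  have hτh0 : 0 < τh := hτl0.trans hτlh
  have col_h : ∀ p : ℝ, 0 < p → p < 1 →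
      ((1 - ph) / ph) ^ γ * (p / (1 - p)) ^ γ = τh ^ (-γ) * (σ p) ^ γ := by
    intro p hp hp1
    have hσp := hσpos p hp hp1
    have h1 : (0:ℝ) ≤ (1 - ph) / ph := div_nonneg h1ph.le hph0.le
    have h2 : (0:ℝ) ≤ p / (1 - p) := div_nonneg hp.le (by linarith)
    rw [← Real.mul_rpow h1 h2, Real.rpow_neg hτh0.le, ← Real.inv_rpow hτh0.le,
      ← Real.mul_rpow (inv_nonneg.mpr hτh0.le) hσp.le]
    congr 1
    rw [hτhdef]
    simp only [hσdef]
    have hne1 : (1:ℝ) - p ≠ 0 := ne_of_gt (by linarith)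
    have hne2 : (1:ℝ) - ph ≠ 0 := ne_of_gt h1ph
    field_simp
  -- expansions of Vlown and Vhown
  have hVl : ∀ p : ℝ, 0 < p → p < 1 →
      Vlown urR ulR urL ulL lam rho c p
        = -(c / rho) * (1 - p) + ((urR * lam - c) / (lam + rho)) * p
          + (lam * (c + ulL * rho) / (rho * (lam + rho)))
            * (τl ^ γ * (σ p) ^ (-γ)) * (1 - p) := by
    intro p hp hp1
    simp only [Vlown]
    rw [← hpldef, ← hγdef]
    linear_combination (lam * (c + ulL * rho) / (rho * (lam + rho))) * (1 - p)
      * col_l p hp hp1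
  have hVh : ∀ p : ℝ, 0 < p → p < 1 →
      Vhown urR ulR urL ulL lam rho c p
        = -(c / rho) * p + ((ulL * lam - c) / (lam + rho)) * (1 - p)
          + (lam * (c + urR * rho) / (rho * (lam + rho)))
            * (τh ^ (-γ) * (σ p) ^ γ) * p := by
    intro p hp hp1
    simp only [Vhown]
    rw [← hphdef, ← hγdef]
    linear_combination (lam * (c + urR * rho) / (rho * (lam + rho))) * p
      * col_h p hp hp1
  -- positivity of the coefficient
  have hb : 0 < lam * (c + ulL * rho) / (rho * (lam + rho)) :=
    div_pos (mul_pos h_lam (by nlinarith)) (mul_pos h_rho hlr)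
  -- identities at pstar
  have idl : Vlown urR ulR urL ulL lam rho c ps - US urR ulR urL ulL lam rho c ps
      = (lam * (c + ulL * rho) / (rho * (lam + rho))) * (1 - ps)
        * (τl ^ γ - lam / (2 * rho + lam)) := by
    rw [hVl ps hps0 hps1, hσps, Real.one_rpow]
    simp only [US]
    rw [hps_eq, hRdef, hLdef]
    field_simp
    ring
  have idh : Vhown urR ulR urL ulL lam rho c ps - US urR ulR urL ulL lam rho c ps
      = (lam * (c + ulL * rho) / (rho * (lam + rho))) * (1 - ps)
        * (τh ^ (-γ) - lam / (2 * rho + lam)) := by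
    rw [hVh ps hps0 hps1, hσps, Real.one_rpow]
    simp only [US]
    rw [hps_eq, hRdef, hLdef]
    field_simp
    ring
  have hcoefs : 0 < lam * (c + ulL * rho) / (rho * (lam + rho)) * (1 - ps) :=
    mul_pos hb (by linarith)
  have hm_or : lam / (2 * rho + lam) ≤ τl ^ γ ∨ lam / (2 * rho + lam) ≤ τh ^ (-γ) := by
    rcases max_cases (Vlown urR ulR urL ulL lam rho c ps) (Vhown urR ulR urL ulL lam rho c ps)
      with ⟨hmx, _⟩ | ⟨hmx, _⟩
    · left
      rw [hmx] at h_case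
      by_contra hcon
      push_neg at hcon
      have hn := mul_neg_of_pos_of_neg hcoefs
        (by linarith : τl ^ γ - lam / (2 * rho + lam) < 0)
      have h2 := sub_nonneg.mpr h_case
      rw [idl] at h2
      linarith
    · right
      rw [hmx] at h_case
      by_contra hcon
      push_neg at hcon
      have hn := mul_neg_of_pos_of_neg hcoefs
        (by linarith : τh ^ (-γ) - lam / (2 * rho + lam) < 0)
      have h2 := sub_nonneg.mpr h_case
      rw [idh] at h2
      linarith
  -- the main difference identity
  have hdiff : ∀ p : ℝ, 0 < p → p < 1 →
      Vlown urR ulR urL ulL lam rho c p - Vhown urR ulR urL ulL lam rho c p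
        = (lam * (c + ulL * rho) / (rho * (lam + rho))) * (1 - p)
          * (σ p - 1 + τl ^ γ * (σ p) ^ (-γ) - τh ^ (-γ) * (σ p) ^ (1 + γ)) := by
    intro p hp hp1
    have hσp := hσpos p hp hp1
    rw [hVl p hp hp1, hVh p hp hp1]
    have e : (σ p) ^ ((1:ℝ) + γ) = σ p * (σ p) ^ γ := by
      rw [Real.rpow_add hσp, Real.rpow_one]
    rw [e]
    set X := (σ p) ^ (-γ) with hXdef
    set Y := (σ p) ^ γ with hYdef
    simp only [hσdef]
    have hne1 : (1:ℝ) - p ≠ 0 := ne_of_gt (by linarith)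
    rw [hRdef, hLdef]
    field_simp
    ring
  -- apply the core lemma
  have hmax' : 1 / (2 * γ + 1) ≤ max (τl ^ γ) (τh ^ (-γ)) := by
    have hγpos : (0:ℝ) < 2 * γ + 1 := by linarith
    have hmeq : lam / (2 * rho + lam) = 1 / (2 * γ + 1) := by
      rw [hγdef, div_eq_div_iff h2rl.ne'
        (by positivity : (0:ℝ) < 2 * (rho / lam) + 1).ne']
      field_simp
    rcases hm_or with h | h
    · exact le_max_iff.mpr (Or.inl (hmeq ▸ h))
    · exact le_max_iff.mpr (Or.inr (hmeq ▸ h))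
  obtain ⟨s₀, hs₀mem, hzero, huniq, hsgnp, hsgnn⟩ := core γ τl τh hγ hτl0 hτlh hmax'
  have hs₀0 : 0 < s₀ := hτl0.trans hs₀mem.1
  -- the crossing belief
  set pc := L * s₀ / (R + L * s₀) with hpcdef
  have hden : 0 < R + L * s₀ := by
    have := mul_pos hL hs₀0
    linarith
  have hpc0 : 0 < pc := div_pos (mul_pos hL hs₀0) hden
  have hpc1 : pc < 1 := by
    rw [hpcdef, div_lt_one hden]
    linarith
  have hσpc : σ pc = s₀ := by
    simp only [hσdef]
    have h1pc : 1 - pc = R / (R + L * s₀) := by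
      rw [hpcdef]
      field_simp
      ring
    rw [h1pc, hpcdef]
    field_simp
  have hpcl : pl < pc := by
    have h := hs₀mem.1
    rw [← hσpc, hτldef] at h
    exact (hσmono pl pc hpl0 hpl1 hpc0 hpc1).mp h
  have hpch : pc < ph := by
    have h := hs₀mem.2
    rw [← hσpc, hτhdef] at h
    exact (hσmono pc ph hpc0 hpc1 hph0 hph1).mp h
  refine ⟨pc, ⟨hpcl, hpch⟩, ?_, ?_, ?_, ?_⟩
  · have h := hdiff pc hpc0 hpc1
    rw [hσpc, hzero, mul_zero] at h
    exact sub_eq_zero.mp h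
  · intro q hq heq
    have hq0 : 0 < q := hpl0.trans hq.1
    have hq1 : q < 1 := hq.2.trans hph1
    have h := hdiff q hq0 hq1
    rw [heq, sub_self] at h
    have hcoefq : 0 < lam * (c + ulL * rho) / (rho * (lam + rho)) * (1 - q) :=
      mul_pos hb (by linarith)
    have hφq : σ q - 1 + τl ^ γ * (σ q) ^ (-γ) - τh ^ (-γ) * (σ q) ^ (1 + γ) = 0 := by
      rcases mul_eq_zero.mp h.symm with h' | h'
      · exact absurd h' hcoefq.ne'
      · exact h'
    have hσq_mem : σ q ∈ Ioo τl τh := by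
      constructor
      · rw [hτldef]
        exact (hσmono pl q hpl0 hpl1 hq0 hq1).mpr hq.1
      · rw [hτhdef]
        exact (hσmono q ph hq0 hq1 hph0 hph1).mpr hq.2
    have heqσ := huniq (σ q) hσq_mem hφq
    rw [← hσpc] at heqσ
    by_contra hne
    rcases lt_or_gt_of_ne hne with hlt | hgt
    · have hmono := (hσmono q pc hq0 hq1 hpc0 hpc1).mpr hlt
      rw [heqσ] at hmono
      exact lt_irrefl _ hmono
    · have hmono := (hσmono pc q hpc0 hpc1 hq0 hq1).mpr hgt
      rw [heqσ] at hmono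
      exact lt_irrefl _ hmono
  · intro q hq
    have hq0 : 0 < q := hpl0.trans hq.1
    have hq1 : q < 1 := hq.2.trans hpc1
    have hσq_mem : σ q ∈ Ioo τl s₀ := by
      constructor
      · rw [hτldef]
        exact (hσmono pl q hpl0 hpl1 hq0 hq1).mpr hq.1
      · rw [← hσpc]
        exact (hσmono q pc hq0 hq1 hpc0 hpc1).mpr hq.2
    have hp' := hsgnp (σ q) hσq_mem
    have h := hdiff q hq0 hq1
    have hsub : 0 < Vlown urR ulR urL ulL lam rho c q - Vhown urR ulR urL ulL lam rho c q := by
      rw [h]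
      exact mul_pos (mul_pos hb (by linarith)) hp'
    linarith
  · intro q hq
    have hq0 : 0 < q := hpc0.trans hq.1
    have hq1 : q < 1 := hq.2.trans hph1
    have hσq_mem : σ q ∈ Ioo s₀ τh := by
      constructor
      · rw [← hσpc]
        exact (hσmono pc q hpc0 hpc1 hq0 hq1).mpr hq.1
      · rw [hτhdef]
        exact (hσmono q ph hq0 hq1 hph0 hph1).mpr hq.2
    have hn' := hsgnn (σ q) hσq_mem
    have h := hdiff q hq0 hq1
    have hsub : Vlown urR ulR urL ulL lam rho c q - Vhown urR ulR urL ulL lam rho c q < 0 := by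
      rw [h]
      exact mul_neg_of_pos_of_neg (mul_pos hb (by linarith)) hn'
    linarith
end
end

section
/- Structure of the solution candidate, case (b): assume ρ > 0, condition (EXP), and max{V̲_own(p*), V̄_own(p*)} < U^S(p*). Then p̲* < p* < p̄*; there exists a unique p̲ ∈ (p̲*, p*) with V̲_own(p̲) = V̲_opp(p̲), and V̲_own(p) > V̲_opp(p) for every p ∈ (p̲*, p̲) while V̲_own(p) < V̲_opp(p) for every p ∈ (p̲, p*); and there exists a unique p̄ ∈ (p*, p̄*) with V̄_own(p̄) = V̄_opp(p̄), and V̄_own(p) < V̄_opp(p) for every p ∈ (p*, p̄) while V̄_own(p) > V̄_opp(p) for every p ∈ (p̄, p̄*). -/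
set_option linter.unusedVariables false

noncomputable section

open Set Filter Topology

/-- near a zero with negative derivative, there is a negative value just to the right -/
lemma exists_right_neg {f : ℝ → ℝ} {d z u : ℝ} (hder : HasDerivAt f d z)
    (hz : f z = 0) (hneg : d < 0) (hzu : z < u) : ∃ x ∈ Ioo z u, f x < 0 := by
  have hslope : Tendsto (slope f z) (𝓝[>] z) (𝓝 d) :=
    (hasDerivAt_iff_tendsto_slope.mp hder).mono_left
      (nhdsWithin_mono _ (fun x hx => ne_of_gt hx))
  have h1 : ∀ᶠ x in 𝓝[>] z, slope f z x < 0 := hslope.eventually_lt_const hneg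
  have h2 : ∀ᶠ x in 𝓝[>] z, x ∈ Ioo z u := Ioo_mem_nhdsGT_of_mem ⟨le_refl _, hzu⟩
  obtain ⟨x, hx1, hx2⟩ := (h1.and h2).exists
  refine ⟨x, hx2, ?_⟩
  have hxz : 0 < x - z := by linarith [hx2.1]
  have : slope f z x = f x / (x - z) := by
    simp [slope_def_field, hz]
  rw [this] at hx1
  have := (div_neg_iff.mp hx1)
  rcases this with ⟨h, h'⟩ | ⟨h, h'⟩
  · linarith
  · exact h

/-- near a zero with negative derivative, there is a positive value just to the left -/
lemma exists_left_pos {f : ℝ → ℝ} {d z l : ℝ} (hder : HasDerivAt f d z)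
    (hz : f z = 0) (hneg : d < 0) (hlz : l < z) : ∃ x ∈ Ioo l z, 0 < f x := by
  have hslope : Tendsto (slope f z) (𝓝[<] z) (𝓝 d) :=
    (hasDerivAt_iff_tendsto_slope.mp hder).mono_left
      (nhdsWithin_mono _ (fun x hx => ne_of_lt hx))
  have h1 : ∀ᶠ x in 𝓝[<] z, slope f z x < 0 := hslope.eventually_lt_const hneg
  have h2 : ∀ᶠ x in 𝓝[<] z, x ∈ Ioo l z := Ioo_mem_nhdsLT_of_mem ⟨hlz, le_refl _⟩
  obtain ⟨x, hx1, hx2⟩ := (h1.and h2).exists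
  refine ⟨x, hx2, ?_⟩
  have hxz : x - z < 0 := by linarith [hx2.2]
  have : slope f z x = f x / (x - z) := by simp [slope_def_field, hz]
  rw [this] at hx1
  rcases div_neg_iff.mp hx1 with ⟨h, h'⟩ | ⟨h, h'⟩
  · exact h
  · linarith

lemma single_crossing (f f' : ℝ → ℝ) (a b : ℝ) (hab : a < b)
    (hder : ∀ x ∈ Icc a b, HasDerivAt f (f' x) x)
    (hneg : ∀ x ∈ Ioo a b, f x = 0 → f' x < 0)
    (hfa : 0 < f a) (hfb : f b < 0) :
    ∃ z ∈ Ioo a b, f z = 0 ∧ (∀ q ∈ Ioo a b, f q = 0 → q = z)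
      ∧ (∀ q ∈ Ioo a z, 0 < f q) ∧ (∀ q ∈ Ioo z b, f q < 0) := by
  have cont : ContinuousOn f (Icc a b) :=
    fun x hx => (hder x hx).continuousAt.continuousWithinAt
  set S : Set ℝ := Icc a b ∩ f ⁻¹' Iic 0 with hS_def
  have hSb : b ∈ S := ⟨⟨le_of_lt hab, le_refl _⟩, le_of_lt hfb⟩
  have hS_closed : IsClosed S := cont.preimage_isClosed_of_isClosed isClosed_Icc isClosed_Iic
  have hS_bdd : BddBelow S := ⟨a, fun x hx => hx.1.1⟩
  set z := sInf S with hz_def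
  have hzS : z ∈ S := hS_closed.csInf_mem ⟨b, hSb⟩ hS_bdd
  have hza : a ≤ z := le_csInf ⟨b, hSb⟩ (fun x hx => hx.1.1)
  have hzb' : z ≤ b := csInf_le hS_bdd hSb
  have hza' : a < z := lt_of_le_of_ne hza (by
    intro h; rw [← h] at hzS; exact absurd hzS.2 (by simp; linarith))
  -- points left of z are positive
  have hleft : ∀ q ∈ Ico a z, 0 < f q := by
    intro q hq
    by_contra h
    push_neg at h
    have : q ∈ S := ⟨⟨hq.1, le_trans (le_of_lt hq.2) hzb'⟩, h⟩
    exact absurd (csInf_le hS_bdd this) (not_le.mpr hq.2)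
  have hz0 : f z = 0 := by
    by_contra h
    have hzlt : f z < 0 := lt_of_le_of_ne hzS.2 h
    obtain ⟨y, hy, hy0⟩ : ∃ y ∈ Ioo a z, f y = 0 := by
      have := intermediate_value_Ioo' (le_of_lt hza') (cont.mono (Icc_subset_Icc le_rfl hzb'))
      obtain ⟨y, hy, hy0⟩ := this (show (0:ℝ) ∈ Ioo (f z) (f a) from ⟨hzlt, hfa⟩)
      exact ⟨y, hy, hy0⟩
    exact absurd hy0 (ne_of_gt (hleft y ⟨le_of_lt hy.1, hy.2⟩))
  have hzb : z < b := lt_of_le_of_ne hzb' (by intro h; rw [h] at hz0; linarith)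
  have hzIoo : z ∈ Ioo a b := ⟨hza', hzb⟩
  -- right of z : negative
  have hright : ∀ x ∈ Ioc z b, f x < 0 := by
    by_contra h
    push_neg at h
    obtain ⟨x2, hx2, hx2f⟩ := h
    -- get x1 ∈ (z,x2) with f x1 < 0
    obtain ⟨x1, hx1, hx1f⟩ := exists_right_neg (hder z ⟨hza, hzb'⟩) hz0
      (hneg z hzIoo hz0) hx2.1
    -- get y2 with x1 < y2 ≤ b, 0 < f y2
    obtain ⟨y2, hy2x1, hy2b, hy2f⟩ : ∃ y2, x1 < y2 ∧ y2 ≤ b ∧ 0 < f y2 := by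
      rcases lt_or_eq_of_le hx2f with h' | h'
      · exact ⟨x2, hx1.2, hx2.2, h'⟩
      · have hx2b : x2 < b := lt_of_le_of_ne hx2.2 (by intro h''; rw [h''] at h'; linarith)
        obtain ⟨y2, hy2, hy2f⟩ := exists_left_pos (hder x2 ⟨le_of_lt (lt_trans hza' hx2.1), hx2.2⟩)
          h'.symm (hneg x2 ⟨lt_trans hza' hx2.1, hx2b⟩ h'.symm) hx1.2
        exact ⟨y2, hy2.1, le_trans (le_of_lt hy2.2) hx2.2, hy2f⟩
    set T : Set ℝ := Icc x1 y2 ∩ f ⁻¹' Iic 0 with hT_def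
    have hx1T : x1 ∈ T := ⟨⟨le_refl _, le_of_lt hy2x1⟩, le_of_lt hx1f⟩
    have hsub : Icc x1 y2 ⊆ Icc a b :=
      Icc_subset_Icc (le_of_lt (lt_trans hza' hx1.1)) hy2b
    have hT_closed : IsClosed T :=
      (cont.mono hsub).preimage_isClosed_of_isClosed isClosed_Icc isClosed_Iic
    have hT_bdd : BddAbove T := ⟨y2, fun x hx => hx.1.2⟩
    set w := sSup T with hw_def
    have hwT : w ∈ T := hT_closed.csSup_mem ⟨x1, hx1T⟩ hT_bdd
    have hwy2 : w < y2 := lt_of_le_of_ne hwT.1.2 (by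
      intro h'; rw [h'] at hwT
      have := hwT.2
      simp only [mem_preimage, mem_Iic] at this
      linarith)
    have hwx1 : x1 ≤ w := le_csSup hT_bdd hx1T
    have hwpos : ∀ x ∈ Ioc w y2, 0 < f x := by
      intro x hx
      by_contra h'
      push_neg at h'
      have : x ∈ T := ⟨⟨le_trans hwx1 (le_of_lt hx.1), hx.2⟩, h'⟩
      exact absurd (le_csSup hT_bdd this) (not_le.mpr hx.1)
    have hw0 : f w = 0 := by
      by_contra h'
      have hwlt : f w < 0 := lt_of_le_of_ne hwT.2 h'
      obtain ⟨y, hy, hy0⟩ := (intermediate_value_Ioo (le_of_lt hwy2)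
        (cont.mono (Icc_subset_Icc (le_trans (le_of_lt (lt_trans hza' hx1.1)) hwx1) hy2b)))
        (show (0:ℝ) ∈ Ioo (f w) (f y2) from ⟨hwlt, hy2f⟩)
      exact absurd hy0 (ne_of_gt (hwpos y ⟨hy.1, le_of_lt hy.2⟩))
    have hwIoo : w ∈ Ioo a b :=
      ⟨lt_of_lt_of_le (lt_trans hza' hx1.1) hwx1, lt_of_lt_of_le hwy2 hy2b⟩
    have hwneg : f' w < 0 := hneg w hwIoo hw0
    -- slope from the right is positive
    have hslope : Tendsto (slope f w) (𝓝[>] w) (𝓝 (f' w)) :=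
      (hasDerivAt_iff_tendsto_slope.mp (hder w ⟨le_of_lt hwIoo.1, le_of_lt hwIoo.2⟩)).mono_left
        (nhdsWithin_mono _ (fun x hx => ne_of_gt hx))
    have hev : ∀ᶠ x in 𝓝[>] w, 0 ≤ slope f w x := by
      filter_upwards [Ioo_mem_nhdsGT_of_mem (show w ∈ Ico w y2 from ⟨le_refl _, hwy2⟩)]
        with x hx
      have hfx : 0 < f x := hwpos x ⟨hx.1, le_of_lt hx.2⟩
      have : slope f w x = f x / (x - w) := by simp [slope_def_field, hw0]
      rw [this]
      have hxw : 0 < x - w := by linarith [hx.1]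
      positivity
    have : 0 ≤ f' w := ge_of_tendsto hslope hev
    linarith
  refine ⟨z, hzIoo, hz0, ?_, fun q hq => hleft q ⟨le_of_lt hq.1, hq.2⟩,
    fun q hq => hright q ⟨hq.1, le_of_lt hq.2⟩⟩
  intro q hq hq0
  rcases lt_trichotomy q z with h | h | h
  · exact absurd hq0 (ne_of_gt (hleft q ⟨le_of_lt hq.1, h⟩))
  · exact h
  · exact absurd hq0 (ne_of_lt (hright q ⟨h, le_of_lt hq.2⟩))


set_option maxHeartbeats 1000000 in
lemma lower (urR ulR urL ulL lam rho c : ℝ)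
    (h_urR : urR > max 0 ulR) (h_ulL : ulL > max 0 urL)
    (h_lam : 0 < lam) (h_rho : 0 < rho) (h_c : 0 ≤ c)
    (hE2 : rho * ulR + c < lam * (urR - ulR))
    (hV : Vlown urR ulR urL ulL lam rho c (pstar urR ulR urL ulL lam rho c)
          < US urR ulR urL ulL lam rho c (pstar urR ulR urL ulL lam rho c)) :
    plowStar urR ulR urL ulL lam rho c < pstar urR ulR urL ulL lam rho c
    ∧ ∃ pl ∈ Set.Ioo (plowStar urR ulR urL ulL lam rho c) (pstar urR ulR urL ulL lam rho c),
        Vlown urR ulR urL ulL lam rho c pl = Vlopp urR ulR urL ulL lam rho c pl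
        ∧ (∀ q ∈ Set.Ioo (plowStar urR ulR urL ulL lam rho c) (pstar urR ulR urL ulL lam rho c),
            Vlown urR ulR urL ulL lam rho c q = Vlopp urR ulR urL ulL lam rho c q → q = pl)
        ∧ (∀ q ∈ Set.Ioo (plowStar urR ulR urL ulL lam rho c) pl,
            Vlopp urR ulR urL ulL lam rho c q < Vlown urR ulR urL ulL lam rho c q)
        ∧ (∀ q ∈ Set.Ioo pl (pstar urR ulR urL ulL lam rho c),
            Vlown urR ulR urL ulL lam rho c q < Vlopp urR ulR urL ulL lam rho c q) := by
  have hurR0 : 0 < urR := lt_of_le_of_lt (le_max_left _ _) h_urR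
  have hulR : ulR < urR := lt_of_le_of_lt (le_max_right _ _) h_urR
  have hulL0 : 0 < ulL := lt_of_le_of_lt (le_max_left _ _) h_ulL
  have hg : 0 < urR - ulR := by linarith
  have hlr : (0:ℝ) < lam + rho := by linarith
  have h2l : (0:ℝ) < 2 * rho + lam := by linarith
  have hal : 0 < rho / lam := by positivity
  have hrho' : rho ≠ 0 := h_rho.ne'
  have hlam' : lam ≠ 0 := h_lam.ne'
  have hlr' : lam + rho ≠ 0 := hlr.ne'
  have h2l' : 2 * rho + lam ≠ 0 := h2l.ne'
  have hn1 : 0 < ulL * rho + c := by nlinarith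
  have hn2 : 0 < urR * rho + c := by nlinarith
  have hda : 0 < rho * (ulL - ulR) + (urR - ulR) * lam := by nlinarith
  have hS : 0 < (urR * rho + c) + (ulL * rho + c) := by linarith
  obtain ⟨a, ha_def⟩ : ∃ x, x = plowStar urR ulR urL ulL lam rho c := ⟨_, rfl⟩
  obtain ⟨s, hs_def⟩ : ∃ x, x = pstar urR ulR urL ulL lam rho c := ⟨_, rfl⟩
  rw [← hs_def] at hV
  rw [← ha_def, ← hs_def]
  have ha0 : 0 < a := by rw [ha_def]; unfold plowStar; exact div_pos hn1 hda
  have ha1 : a < 1 := by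
    rw [ha_def]; unfold plowStar; rw [div_lt_one hda]; nlinarith
  have hs0 : 0 < s := by rw [hs_def]; unfold pstar; exact div_pos hn1 hS
  have hs1 : s < 1 := by
    rw [hs_def]; unfold pstar; rw [div_lt_one hS]; nlinarith
  have ha1' : 0 < 1 - a := by linarith
  have hs1' : 0 < 1 - s := by linarith
  -- decompositions
  have hVlown : ∀ p : ℝ, Vlown urR ulR urL ulL lam rho c p
      = (-(c / rho) * (1 - p) + ((urR * lam - c) / (lam + rho)) * p)
        + (lam * (c + ulL * rho) / (rho * (lam + rho)) * (a / (1 - a)) ^ (rho / lam))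
          * (((1 - p) / p) ^ (rho / lam) * (1 - p)) := by
    intro p; unfold Vlown; rw [← ha_def]; ring
  have hVlopp : ∀ p : ℝ, Vlopp urR ulR urL ulL lam rho c p
      = (-(c / rho) * p + ((ulL * lam - c) / (lam + rho)) * (1 - p))
        + (lam / (rho * (2 * rho + lam)) * (lam * (urR * rho + c) / (lam + rho)))
          * ((((1 - s) / s) * (p / (1 - p))) ^ (rho / lam) * p) := by
    intro p; unfold Vlopp; rw [← hs_def]; ring
  have hid1 : ∀ p : ℝ, -(c / rho) * (1 - p) + ((urR * lam - c) / (lam + rho)) * p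
      = US urR ulR urL ulL lam rho c p
        + lam / ((lam + rho) * (2 * rho + lam)) * (p * (rho * urR + c) + (1 - p) * (rho * ulL + c))
        - lam * (c + ulL * rho) / (rho * (lam + rho)) * (1 - p) := by
    intro p; unfold US; field_simp; ring
  have hid2 : ∀ p : ℝ, -(c / rho) * p + ((ulL * lam - c) / (lam + rho)) * (1 - p)
      = US urR ulR urL ulL lam rho c p
        + lam / (rho * (lam + rho) * (2 * rho + lam))
            * ((1 - p) * rho * (rho * ulL + c) - p * (lam + rho) * (rho * urR + c)) := by
    intro p; unfold US; field_simp; ring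
  -- a < s
  have hkappa : 0 < lam / ((lam + rho) * (2 * rho + lam)) := by positivity
  have hCl : 0 < lam * (c + ulL * rho) / (rho * (lam + rho)) := by
    have : 0 < c + ulL * rho := by nlinarith
    positivity
  have hM : 0 < lam / (rho * (2 * rho + lam)) * (lam * (urR * rho + c) / (lam + rho)) := by
    have := hn2
    positivity
  have has : a < s := by
    by_contra hsa
    push_neg at hsa
    have hbase : 1 ≤ a / (1 - a) * ((1 - s) / s) := by
      rw [div_mul_div_comm, le_div_iff₀ (by positivity)]
      nlinarith
    have hK : 1 ≤ (a / (1 - a)) ^ (rho / lam) * ((1 - s) / s) ^ (rho / lam) := by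
      rw [← Real.mul_rpow (by positivity) (by positivity)]
      calc (1:ℝ) = 1 ^ (rho / lam) := (Real.one_rpow _).symm
      _ ≤ (a / (1 - a) * ((1 - s) / s)) ^ (rho / lam) :=
          Real.rpow_le_rpow (by norm_num) hbase hal.le
    have hG : 0 < lam / ((lam + rho) * (2 * rho + lam))
        * (s * (rho * urR + c) + (1 - s) * (rho * ulL + c)) := by
      apply mul_pos hkappa
      nlinarith [mul_pos hs0 hn2, mul_pos hs1' hn1]
    have hkey : US urR ulR urL ulL lam rho c s
        + lam / ((lam + rho) * (2 * rho + lam))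
          * (s * (rho * urR + c) + (1 - s) * (rho * ulL + c))
        ≤ Vlown urR ulR urL ulL lam rho c s := by
      rw [hVlown s, hid1 s]
      have h1 : 0 < lam * (c + ulL * rho) / (rho * (lam + rho)) * (1 - s) :=
        mul_pos hCl hs1'
      nlinarith [mul_le_mul_of_nonneg_right
        (sub_nonneg.mpr hK) (le_of_lt h1)]
    linarith
  -- derivative formulas
  obtain ⟨E1, hE1_def⟩ : ∃ F : ℝ → ℝ, F = fun p =>
      c / rho + (urR * lam - c) / (lam + rho)
        - lam * (c + ulL * rho) / (rho * (lam + rho)) * (a / (1 - a)) ^ (rho / lam)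
          * (((1 - p) / p) ^ (rho / lam) * (1 + rho / lam / p)) := ⟨_, rfl⟩
  obtain ⟨E2, hE2_def⟩ : ∃ F : ℝ → ℝ, F = fun p =>
      -(c / rho) - (ulL * lam - c) / (lam + rho)
        + lam / (rho * (2 * rho + lam)) * (lam * (urR * rho + c) / (lam + rho))
          * (((1 - s) / s * (p / (1 - p))) ^ (rho / lam) * (1 + rho / lam / (1 - p))) := ⟨_, rfl⟩
  have hdVlown : ∀ p : ℝ, 0 < p → p < 1 →
      HasDerivAt (fun q => Vlown urR ulR urL ulL lam rho c q) (E1 p) p := by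
    intro p hp0 hp1
    have hp1' : 0 < 1 - p := by linarith
    have hu : 0 < (1 - p) / p := div_pos hp1' hp0
    have h1 : HasDerivAt (fun q : ℝ => (1 - q) / q) (-(1 / p ^ 2)) p := by
      have hnum : HasDerivAt (fun q : ℝ => 1 - q) (-1) p := (hasDerivAt_id p).const_sub 1
      have := hnum.div (hasDerivAt_id p) hp0.ne'
      refine this.congr_deriv ?_
      simp only [id]
      field_simp
      ring
    have h2 := h1.rpow_const (p := rho / lam) (Or.inl hu.ne')
    have h3 := h2.mul ((hasDerivAt_id p).const_sub 1)
    have h4 := ((((hasDerivAt_id p).const_sub 1).const_mul (-(c / rho))).add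
      ((hasDerivAt_id p).const_mul ((urR * lam - c) / (lam + rho)))).add
      (h3.const_mul (lam * (c + ulL * rho) / (rho * (lam + rho)) * (a / (1 - a)) ^ (rho / lam)))
    have heq : (fun q => Vlown urR ulR urL ulL lam rho c q)
        = fun q => -(c / rho) * (1 - q) + (urR * lam - c) / (lam + rho) * q
          + lam * (c + ulL * rho) / (rho * (lam + rho)) * (a / (1 - a)) ^ (rho / lam)
            * (((1 - q) / q) ^ (rho / lam) * (1 - q)) := by
      funext q; rw [hVlown q]
    rw [heq, hE1_def]
    refine h4.congr_deriv ?_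
    simp only [id]
    rw [Real.rpow_sub hu, Real.rpow_one]
    field_simp
    ring
  have hdVlopp : ∀ p : ℝ, 0 < p → p < 1 →
      HasDerivAt (fun q => Vlopp urR ulR urL ulL lam rho c q) (E2 p) p := by
    intro p hp0 hp1
    have hp1' : 0 < 1 - p := by linarith
    have hv : 0 < (1 - s) / s * (p / (1 - p)) :=
      mul_pos (div_pos hs1' hs0) (div_pos hp0 hp1')
    have h1 : HasDerivAt (fun q : ℝ => (1 - s) / s * (q / (1 - q)))
        ((1 - s) / s * (1 / (1 - p) ^ 2)) p := by
      have hq : HasDerivAt (fun q : ℝ => q / (1 - q)) (1 / (1 - p) ^ 2) p := by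
        have := (hasDerivAt_id p).div ((hasDerivAt_id p).const_sub 1) hp1'.ne'
        refine this.congr_deriv ?_
        simp only [id]
        field_simp
        ring
      exact hq.const_mul _
    have h2 := h1.rpow_const (p := rho / lam) (Or.inl hv.ne')
    have h3 := h2.mul (hasDerivAt_id p)
    have h4 := (((hasDerivAt_id p).const_mul (-(c / rho))).add
      (((hasDerivAt_id p).const_sub 1).const_mul ((ulL * lam - c) / (lam + rho)))).add
      (h3.const_mul (lam / (rho * (2 * rho + lam)) * (lam * (urR * rho + c) / (lam + rho))))
    have heq : (fun q => Vlopp urR ulR urL ulL lam rho c q)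
        = fun q => -(c / rho) * q + (ulL * lam - c) / (lam + rho) * (1 - q)
          + lam / (rho * (2 * rho + lam)) * (lam * (urR * rho + c) / (lam + rho))
            * (((1 - s) / s * (q / (1 - q))) ^ (rho / lam) * q) := by
      funext q; rw [hVlopp q]
    rw [heq, hE2_def]
    refine h4.congr_deriv ?_
    simp only [id]
    rw [Real.rpow_sub hv, Real.rpow_one]
    field_simp
    ring
  have hdUS : ∀ p : ℝ, HasDerivAt (fun q => US urR ulR urL ulL lam rho c q)
      (lam * (urR - ulL) / (2 * rho + lam)) p := by
    intro p
    have h1 : HasDerivAt (fun q : ℝ => lam * (q * urR + (1 - q) * ulL) - 2 * c)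
        (lam * (urR - ulL)) p := by
      have := ((((hasDerivAt_id p).mul_const urR).add
        (((hasDerivAt_id p).const_sub 1).mul_const ulL)).const_mul lam).sub_const (2 * c)
      refine this.congr_deriv ?_
      ring
    have h2 := h1.div_const (2 * rho + lam)
    have heq : (fun q => US urR ulR urL ulL lam rho c q)
        = fun q => (lam * (q * urR + (1 - q) * ulL) - 2 * c) / (2 * rho + lam) := rfl
    rw [heq]
    convert h2 using 1
  -- smooth pasting identity at s
  have hid7 : -(c / rho) - (ulL * lam - c) / (lam + rho) - lam * (urR - ulL) / (2 * rho + lam)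
      = -(lam / (rho * (2 * rho + lam)) * (lam * (urR * rho + c) / (lam + rho))
          * (1 + rho / lam / (1 - s))) := by
    have h1s : (1:ℝ) - s = (urR * rho + c) / ((urR * rho + c) + (ulL * rho + c)) := by
      rw [hs_def]; unfold pstar; field_simp; ring
    rw [h1s]
    field_simp
    ring
  -- derivative of Vlopp - US is negative left of s
  have hZderiv : ∀ q : ℝ, 0 < q → q < s →
      E2 q - lam * (urR - ulL) / (2 * rho + lam) < 0 := by
    intro q hq0 hqs
    have hq1 : q < 1 := lt_trans hqs hs1
    have hq1' : 0 < 1 - q := by linarith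
    have hT1 : ((1 - s) / s * (q / (1 - q))) ^ (rho / lam) < 1 := by
      apply Real.rpow_lt_one (by positivity) ?_ hal
      rw [div_mul_div_comm, div_lt_one (by positivity)]
      nlinarith
    have hf1 : 0 < 1 + rho / lam / (1 - q) := by positivity
    have hff : 1 + rho / lam / (1 - q) < 1 + rho / lam / (1 - s) := by
      have h' : rho / lam / (1 - q) < rho / lam / (1 - s) :=
        div_lt_div_of_pos_left hal hs1' (by linarith)
      linarith
    have hprod : ((1 - s) / s * (q / (1 - q))) ^ (rho / lam) * (1 + rho / lam / (1 - q))
        < 1 + rho / lam / (1 - s) := by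
      calc ((1 - s) / s * (q / (1 - q))) ^ (rho / lam) * (1 + rho / lam / (1 - q))
          < 1 * (1 + rho / lam / (1 - q)) := mul_lt_mul_of_pos_right hT1 hf1
      _ = 1 + rho / lam / (1 - q) := one_mul _
      _ < 1 + rho / lam / (1 - s) := hff
    rw [hE2_def]
    have hMul := mul_lt_mul_of_pos_left hprod hM
    linarith [hid7, hMul]
  -- Vlopp s = US s
  have hZs : Vlopp urR ulR urL ulL lam rho c s - US urR ulR urL ulL lam rho c s = 0 := by
    rw [hVlopp s]
    have hTs : (1 - s) / s * (s / (1 - s)) = 1 := by field_simp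
    rw [hTs, Real.one_rpow, hid2 s]
    have hid3 : lam / (rho * (lam + rho) * (2 * rho + lam))
        * ((1 - s) * rho * (rho * ulL + c) - s * (lam + rho) * (rho * urR + c))
        + lam / (rho * (2 * rho + lam)) * (lam * (urR * rho + c) / (lam + rho)) * (1 * s)
        = 0 := by
      rw [hs_def]; unfold pstar; field_simp; ring
    linarith [hid3]
  -- Vlopp - US > 0 strictly left of s
  have hZF : ∀ q : ℝ, 0 < q → q < s →
      0 < Vlopp urR ulR urL ulL lam rho c q - US urR ulR urL ulL lam rho c q := by
    intro q hq0 hqs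
    have hcont : ContinuousOn
        (fun x => Vlopp urR ulR urL ulL lam rho c x - US urR ulR urL ulL lam rho c x)
        (Icc q s) := by
      intro x hx
      have hx0 : 0 < x := lt_of_lt_of_le hq0 hx.1
      have hx1 : x < 1 := lt_of_le_of_lt hx.2 hs1
      exact (((hdVlopp x hx0 hx1).sub (hdUS x)).continuousAt).continuousWithinAt
    have hanti : StrictAntiOn
        (fun x => Vlopp urR ulR urL ulL lam rho c x - US urR ulR urL ulL lam rho c x)
        (Icc q s) := by
      apply strictAntiOn_of_deriv_neg (convex_Icc q s) hcont
      intro x hx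
      rw [interior_Icc] at hx
      have hx0 : 0 < x := lt_trans hq0 hx.1
      have hx1 : x < 1 := lt_trans hx.2 hs1
      rw [HasDerivAt.deriv (f := fun x => Vlopp urR ulR urL ulL lam rho c x - US urR ulR urL ulL lam rho c x) ((hdVlopp x hx0 hx1).sub (hdUS x))]
      exact hZderiv x hx0 hx.2
    have h1 := hanti (left_mem_Icc.mpr hqs.le) (right_mem_Icc.mpr hqs.le) hqs
    simp only at h1
    linarith [hZs]
  -- endpoint values
  have hfa : 0 < Vlown urR ulR urL ulL lam rho c a - Vlopp urR ulR urL ulL lam rho c a := by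
    have hKa : (a / (1 - a)) ^ (rho / lam) * ((1 - a) / a) ^ (rho / lam) = 1 := by
      rw [← Real.mul_rpow (by positivity) (by positivity),
        show a / (1 - a) * ((1 - a) / a) = 1 by field_simp, Real.one_rpow]
    have hVla : Vlown urR ulR urL ulL lam rho c a = US urR ulR urL ulL lam rho c a
        + lam / ((lam + rho) * (2 * rho + lam))
          * (a * (rho * urR + c) + (1 - a) * (rho * ulL + c)) := by
      rw [hVlown a, hid1 a]
      linear_combination (lam * (c + ulL * rho) / (rho * (lam + rho)) * (1 - a)) * hKa
    have hTa : ((1 - s) / s * (a / (1 - a))) ^ (rho / lam) < 1 := by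
      apply Real.rpow_lt_one (by positivity) ?_ hal
      rw [div_mul_div_comm, div_lt_one (by positivity)]
      nlinarith
    have hVpa : Vlopp urR ulR urL ulL lam rho c a = US urR ulR urL ulL lam rho c a
        + lam / (rho * (lam + rho) * (2 * rho + lam))
            * ((1 - a) * rho * (rho * ulL + c) - a * (lam + rho) * (rho * urR + c))
        + lam / (rho * (2 * rho + lam)) * (lam * (urR * rho + c) / (lam + rho))
            * (((1 - s) / s * (a / (1 - a))) ^ (rho / lam) * a) := by
      rw [hVlopp a, hid2 a]
    have hid4 : lam / ((lam + rho) * (2 * rho + lam))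
          * (a * (rho * urR + c) + (1 - a) * (rho * ulL + c))
        - lam / (rho * (lam + rho) * (2 * rho + lam))
            * ((1 - a) * rho * (rho * ulL + c) - a * (lam + rho) * (rho * urR + c))
        - lam / (rho * (2 * rho + lam)) * (lam * (urR * rho + c) / (lam + rho)) * a
        = 2 * (lam / ((lam + rho) * (2 * rho + lam))) * a * (rho * urR + c) := by
      field_simp
      ring
    have h2a : 0 < 2 * (lam / ((lam + rho) * (2 * rho + lam))) * a * (rho * urR + c) := by
      have h' : 0 < rho * urR + c := by nlinarith
      positivity
    rw [hVla, hVpa]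
    have hMula : lam / (rho * (2 * rho + lam)) * (lam * (urR * rho + c) / (lam + rho))
          * (((1 - s) / s * (a / (1 - a))) ^ (rho / lam) * a)
        < lam / (rho * (2 * rho + lam)) * (lam * (urR * rho + c) / (lam + rho)) * a := by
      have := mul_lt_mul_of_pos_right hTa ha0
      rw [one_mul] at this
      exact mul_lt_mul_of_pos_left this hM
    linarith [hid4, hMula]
  have hfs : Vlown urR ulR urL ulL lam rho c s - Vlopp urR ulR urL ulL lam rho c s < 0 := by
    linarith [hZs, hV]
  -- negative derivative at crossings
  have hneg : ∀ x ∈ Ioo a s,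
      (fun q => Vlown urR ulR urL ulL lam rho c q - Vlopp urR ulR urL ulL lam rho c q) x = 0 →
      (fun q => E1 q - E2 q) x < 0 := by
    intro x hx hfx
    show E1 x - E2 x < 0
    have hx0 : 0 < x := lt_trans ha0 hx.1
    have hx1 : x < 1 := lt_trans hx.2 hs1
    have hx1' : 0 < 1 - x := by linarith
    have hxeq : Vlown urR ulR urL ulL lam rho c x = Vlopp urR ulR urL ulL lam rho c x :=
      sub_eq_zero.mp hfx
    have e1 : lam * x * (1 - x) * E1 x
        = -c + lam * x * urR - (rho + lam * x) * Vlopp urR ulR urL ulL lam rho c x := by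
      rw [hE1_def]
      simp only
      rw [← hxeq, hVlown x]
      field_simp
      ring
    have e2 : lam * x * (1 - x) * E2 x
        = (rho + lam * (1 - x)) * Vlopp urR ulR urL ulL lam rho c x + c
          - lam * (1 - x) * ulL := by
      rw [hE2_def]
      simp only
      rw [hVlopp x]
      field_simp
      ring
    have hUSx : (2 * rho + lam) * US urR ulR urL ulL lam rho c x
        = lam * (x * urR + (1 - x) * ulL) - 2 * c := by
      unfold US
      field_simp
    have hcomb : lam * x * (1 - x) * (E1 x - E2 x)
        = -((2 * rho + lam) * (Vlopp urR ulR urL ulL lam rho c x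
            - US urR ulR urL ulL lam rho c x)) := by
      have expand : lam * x * (1 - x) * (E1 x - E2 x)
          = lam * x * (1 - x) * E1 x - lam * x * (1 - x) * E2 x := by ring
      rw [expand, e1, e2]
      linarith [hUSx]
    have hZx := hZF x hx0 hx.2
    have hlt : lam * x * (1 - x) * (E1 x - E2 x) < 0 := by
      rw [hcomb]
      have h' := mul_pos h2l hZx
      linarith
    by_contra hcon
    push_neg at hcon
    have hA : 0 < lam * x * (1 - x) := mul_pos (mul_pos h_lam hx0) hx1'
    have h'' := mul_nonneg hA.le hcon
    linarith
  -- apply the crossing lemma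
  have hder : ∀ x ∈ Icc a s,
      HasDerivAt (fun q => Vlown urR ulR urL ulL lam rho c q
        - Vlopp urR ulR urL ulL lam rho c q) ((fun q => E1 q - E2 q) x) x := by
    intro x hx
    have hx0 : 0 < x := lt_of_lt_of_le ha0 hx.1
    have hx1 : x < 1 := lt_of_le_of_lt hx.2 hs1
    exact (hdVlown x hx0 hx1).sub (hdVlopp x hx0 hx1)
  obtain ⟨z, hzmem, hz0, huniq, hleft, hright⟩ := single_crossing
    (fun q => Vlown urR ulR urL ulL lam rho c q - Vlopp urR ulR urL ulL lam rho c q)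
    (fun q => E1 q - E2 q) a s has hder hneg hfa hfs
  refine ⟨has, z, hzmem, sub_eq_zero.mp hz0, ?_, ?_, ?_⟩
  · intro q hq heq
    exact huniq q hq (by show Vlown urR ulR urL ulL lam rho c q - Vlopp urR ulR urL ulL lam rho c q = 0; rw [heq]; ring)
  · intro q hq
    have h' : 0 < Vlown urR ulR urL ulL lam rho c q - Vlopp urR ulR urL ulL lam rho c q :=
      hleft q hq
    linarith
  · intro q hq
    have h' : Vlown urR ulR urL ulL lam rho c q - Vlopp urR ulR urL ulL lam rho c q < 0 :=
      hright q hq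
    linarith


lemma swap_US (urR ulR urL ulL lam rho c : ℝ) (p : ℝ) :
    US ulL urL ulR urR lam rho c (1 - p) = US urR ulR urL ulL lam rho c p := by
  unfold US; ring_nf

lemma swap_UFA (urR ulR urL ulL lam rho c : ℝ) (p : ℝ) :
    UFA ulL urL ulR urR lam rho c (1 - p) = UFA urR ulR urL ulL lam rho c p := by
  unfold UFA; ring_nf

lemma swap_U (urR ulR urL ulL lam rho c : ℝ) (p : ℝ) :
    U ulL urL ulR urR lam rho c (1 - p) = U urR ulR urL ulL lam rho c p := by
  unfold U Ur Ul
  rw [max_comm]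
  congr 1 <;> ring

lemma swap_phat (urR ulR urL ulL lam rho c : ℝ)
    (h : (urR - ulR) + (ulL - urL) ≠ 0) :
    phat ulL urL ulR urR lam rho c = 1 - phat urR ulR urL ulL lam rho c := by
  unfold phat
  rw [eq_sub_iff_add_eq,
    show (ulL - urL) + (urR - ulR) = (urR - ulR) + (ulL - urL) from by ring,
    ← add_div, div_self h]

lemma swap_pstar (urR ulR urL ulL lam rho c : ℝ)
    (h : (urR * rho + c) + (ulL * rho + c) ≠ 0) :
    pstar ulL urL ulR urR lam rho c = 1 - pstar urR ulR urL ulL lam rho c := by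
  unfold pstar
  rw [eq_sub_iff_add_eq,
    show (ulL * rho + c) + (urR * rho + c) = (urR * rho + c) + (ulL * rho + c) from by ring,
    ← add_div,
    show (urR * rho + c) + (ulL * rho + c) = (urR * rho + c) + (ulL * rho + c) from rfl,
    div_self h]

lemma swap_plowStar (urR ulR urL ulL lam rho c : ℝ)
    (h : rho * (urR - urL) + (ulL - urL) * lam ≠ 0) :
    plowStar ulL urL ulR urR lam rho c = 1 - phighStar urR ulR urL ulL lam rho c := by
  unfold plowStar phighStar
  rw [eq_sub_iff_add_eq, ← add_div,
    show urR * rho + c + ((ulL - urL) * lam - urL * rho - c)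
      = rho * (urR - urL) + (ulL - urL) * lam from by ring,
    div_self h]

lemma swap_phighStar (urR ulR urL ulL lam rho c : ℝ)
    (h : rho * (ulL - ulR) + (urR - ulR) * lam ≠ 0) :
    phighStar ulL urL ulR urR lam rho c = 1 - plowStar urR ulR urL ulL lam rho c := by
  unfold phighStar plowStar
  rw [eq_sub_iff_add_eq, ← add_div,
    show (urR - ulR) * lam - ulR * rho - c + (ulL * rho + c)
      = rho * (ulL - ulR) + (urR - ulR) * lam from by ring,
    div_self h]

lemma swap_Vlown (urR ulR urL ulL lam rho c : ℝ)
    (h : rho * (urR - urL) + (ulL - urL) * lam ≠ 0) (p : ℝ) :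
    Vlown ulL urL ulR urR lam rho c (1 - p) = Vhown urR ulR urL ulL lam rho c p := by
  unfold Vlown Vhown
  rw [swap_plowStar urR ulR urL ulL lam rho c h]
  simp only [sub_sub_cancel]

lemma swap_Vhown (urR ulR urL ulL lam rho c : ℝ)
    (h : rho * (ulL - ulR) + (urR - ulR) * lam ≠ 0) (p : ℝ) :
    Vhown ulL urL ulR urR lam rho c (1 - p) = Vlown urR ulR urL ulL lam rho c p := by
  unfold Vhown Vlown
  rw [swap_phighStar urR ulR urL ulL lam rho c h]
  simp only [sub_sub_cancel]

lemma swap_Vlopp (urR ulR urL ulL lam rho c : ℝ)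
    (h : (urR * rho + c) + (ulL * rho + c) ≠ 0) (p : ℝ) :
    Vlopp ulL urL ulR urR lam rho c (1 - p) = Vhopp urR ulR urL ulL lam rho c p := by
  unfold Vlopp Vhopp
  rw [swap_pstar urR ulR urL ulL lam rho c h]
  simp only [sub_sub_cancel]

lemma exp_facts (urR ulR urL ulL lam rho c : ℝ)
    (h_urR : urR > max 0 ulR) (h_ulL : ulL > max 0 urL)
    (h_lam : 0 < lam) (h_rho : 0 < rho) (h_c : 0 ≤ c)
    (h_EXP : UFA urR ulR urL ulL lam rho c (phat urR ulR urL ulL lam rho c)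
      > U urR ulR urL ulL lam rho c (phat urR ulR urL ulL lam rho c)) :
    rho * ulR + c < lam * (urR - ulR) ∧ rho * urL + c < lam * (ulL - urL) := by
  have hurR0 : 0 < urR := lt_of_le_of_lt (le_max_left _ _) h_urR
  have hulR : ulR < urR := lt_of_le_of_lt (le_max_right _ _) h_urR
  have hulL0 : 0 < ulL := lt_of_le_of_lt (le_max_left _ _) h_ulL
  have hurL : urL < ulL := lt_of_le_of_lt (le_max_right _ _) h_ulL
  have hgam : 0 < urR - ulR := by linarith
  have hbet : 0 < ulL - urL := by linarith
  have hD : 0 < (urR - ulR) + (ulL - urL) := by linarith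
  have hrl : 0 < rho + lam := by linarith
  have hUr : Ur urR ulR urL ulL lam rho c (phat urR ulR urL ulL lam rho c)
      = (urR * ulL - urL * ulR) / ((urR - ulR) + (ulL - urL)) := by
    unfold Ur phat
    field_simp
    ring
  have hUl : Ul urR ulR urL ulL lam rho c (phat urR ulR urL ulL lam rho c)
      = (urR * ulL - urL * ulR) / ((urR - ulR) + (ulL - urL)) := by
    unfold Ul phat
    field_simp
    ring
  have hU : U urR ulR urL ulL lam rho c (phat urR ulR urL ulL lam rho c)
      = (urR * ulL - urL * ulR) / ((urR - ulR) + (ulL - urL)) := by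
    unfold U
    rw [hUr, hUl, max_self]
  have hUFA : UFA urR ulR urL ulL lam rho c (phat urR ulR urL ulL lam rho c)
      = (lam * ((ulL - urL) * urR + (urR - ulR) * ulL) - c * ((urR - ulR) + (ulL - urL)))
        / (((urR - ulR) + (ulL - urL)) * (rho + lam)) := by
    unfold UFA phat
    field_simp
    ring
  rw [hU, hUFA] at h_EXP
  rw [gt_iff_lt, div_lt_div_iff₀ hD (by positivity)] at h_EXP
  have hP : (rho + lam) * (urR * ulL - urL * ulR)
      + c * ((urR - ulR) + (ulL - urL))
      < lam * ((ulL - urL) * urR + (urR - ulR) * ulL) := by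
    nlinarith [h_EXP, hD, mul_pos hD hD]
  constructor
  · nlinarith [hP, mul_pos (mul_pos h_rho hgam) hulL0, mul_nonneg h_c hgam.le, hbet]
  · nlinarith [hP, mul_pos (mul_pos h_rho hbet) hurR0, mul_nonneg h_c hbet.le, hgam]

/-- Structure of the solution candidate, case (b): if the own-biased value is strictly
below the stationary value at `p*`, then `p̲* < p* < p̄*` and each own-biased branch
crosses the corresponding opposite-biased branch exactly once. -/
theorem candidate_structure_case_b
    (urR ulR urL ulL lam rho c : ℝ)
    (h_urR : urR > max 0 ulR) (h_ulL : ulL > max 0 urL)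
    (h_lam : 0 < lam) (h_rho : 0 < rho) (h_c : 0 ≤ c)
    (h_EXP : UFA urR ulR urL ulL lam rho c (phat urR ulR urL ulL lam rho c)
      > U urR ulR urL ulL lam rho c (phat urR ulR urL ulL lam rho c))
    (h_case : max (Vlown urR ulR urL ulL lam rho c (pstar urR ulR urL ulL lam rho c))
        (Vhown urR ulR urL ulL lam rho c (pstar urR ulR urL ulL lam rho c))
      < US urR ulR urL ulL lam rho c (pstar urR ulR urL ulL lam rho c)) :
    plowStar urR ulR urL ulL lam rho c < pstar urR ulR urL ulL lam rho c
    ∧ pstar urR ulR urL ulL lam rho c < phighStar urR ulR urL ulL lam rho c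
    ∧ (∃ pl ∈ Set.Ioo (plowStar urR ulR urL ulL lam rho c)
          (pstar urR ulR urL ulL lam rho c),
        Vlown urR ulR urL ulL lam rho c pl = Vlopp urR ulR urL ulL lam rho c pl
        ∧ (∀ q ∈ Set.Ioo (plowStar urR ulR urL ulL lam rho c)
              (pstar urR ulR urL ulL lam rho c),
            Vlown urR ulR urL ulL lam rho c q = Vlopp urR ulR urL ulL lam rho c q →
              q = pl)
        ∧ (∀ q ∈ Set.Ioo (plowStar urR ulR urL ulL lam rho c) pl,
            Vlopp urR ulR urL ulL lam rho c q < Vlown urR ulR urL ulL lam rho c q)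
        ∧ (∀ q ∈ Set.Ioo pl (pstar urR ulR urL ulL lam rho c),
            Vlown urR ulR urL ulL lam rho c q < Vlopp urR ulR urL ulL lam rho c q))
    ∧ (∃ ph ∈ Set.Ioo (pstar urR ulR urL ulL lam rho c)
          (phighStar urR ulR urL ulL lam rho c),
        Vhown urR ulR urL ulL lam rho c ph = Vhopp urR ulR urL ulL lam rho c ph
        ∧ (∀ q ∈ Set.Ioo (pstar urR ulR urL ulL lam rho c)
              (phighStar urR ulR urL ulL lam rho c),
            Vhown urR ulR urL ulL lam rho c q = Vhopp urR ulR urL ulL lam rho c q →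
              q = ph)
        ∧ (∀ q ∈ Set.Ioo (pstar urR ulR urL ulL lam rho c) ph,
            Vhown urR ulR urL ulL lam rho c q < Vhopp urR ulR urL ulL lam rho c q)
        ∧ (∀ q ∈ Set.Ioo ph (phighStar urR ulR urL ulL lam rho c),
            Vhopp urR ulR urL ulL lam rho c q < Vhown urR ulR urL ulL lam rho c q)) := by
  have hg : 0 < urR - ulR := by
    have := lt_of_le_of_lt (le_max_right _ _) h_urR; linarith
  have hb : 0 < ulL - urL := by
    have := lt_of_le_of_lt (le_max_right _ _) h_ulL; linarith
  have hurR0 : 0 < urR := lt_of_le_of_lt (le_max_left _ _) h_urR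
  have hulL0 : 0 < ulL := lt_of_le_of_lt (le_max_left _ _) h_ulL
  have hrho' : rho ≠ 0 := h_rho.ne'
  have hlam' : lam ≠ 0 := h_lam.ne'
  have hlr' : lam + rho ≠ 0 := by positivity
  have hrl' : rho + lam ≠ 0 := by positivity
  obtain ⟨hE2, hE2'⟩ := exp_facts urR ulR urL ulL lam rho c h_urR h_ulL h_lam h_rho h_c h_EXP
  have hD : (urR - ulR) + (ulL - urL) ≠ 0 := by positivity
  have hS : (urR * rho + c) + (ulL * rho + c) ≠ 0 := by
    have h1 : 0 < urR * rho + c := by nlinarith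
    have h2 : 0 < ulL * rho + c := by nlinarith
    positivity
  have hda : rho * (ulL - ulR) + (urR - ulR) * lam ≠ 0 := by
    have : 0 < rho * (ulL - ulR) + (urR - ulR) * lam := by nlinarith
    exact this.ne'
  have hdb : rho * (urR - urL) + (ulL - urL) * lam ≠ 0 := by
    have : 0 < rho * (urR - urL) + (ulL - urL) * lam := by nlinarith
    exact this.ne'
  have hVs : Vlown urR ulR urL ulL lam rho c (pstar urR ulR urL ulL lam rho c)
      < US urR ulR urL ulL lam rho c (pstar urR ulR urL ulL lam rho c) :=
    lt_of_le_of_lt (le_max_left _ _) h_case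
  have hVs' : Vhown urR ulR urL ulL lam rho c (pstar urR ulR urL ulL lam rho c)
      < US urR ulR urL ulL lam rho c (pstar urR ulR urL ulL lam rho c) :=
    lt_of_le_of_lt (le_max_right _ _) h_case
  obtain ⟨h1, pl, hplmem, hpleq, hpluniq, hplleft, hplright⟩ :=
    lower urR ulR urL ulL lam rho c h_urR h_ulL h_lam h_rho h_c hE2 hVs
  -- swapped
  have hVsw : Vlown ulL urL ulR urR lam rho c (pstar ulL urL ulR urR lam rho c)
      < US ulL urL ulR urR lam rho c (pstar ulL urL ulR urR lam rho c) := by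
    rw [swap_pstar urR ulR urL ulL lam rho c hS, swap_Vlown urR ulR urL ulL lam rho c hdb,
      swap_US urR ulR urL ulL lam rho c]
    exact hVs'
  obtain ⟨h2, ql, hqlmem, hqleq, hqluniq, hqlleft, hqlright⟩ :=
    lower ulL urL ulR urR lam rho c h_ulL h_urR h_lam h_rho h_c hE2' hVsw
  rw [swap_plowStar urR ulR urL ulL lam rho c hdb, swap_pstar urR ulR urL ulL lam rho c hS]
    at h2 hqlmem
  have hsb : pstar urR ulR urL ulL lam rho c < phighStar urR ulR urL ulL lam rho c := by
    linarith
  refine ⟨h1, hsb, ⟨pl, hplmem, hpleq, hpluniq, hplleft, hplright⟩,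
    1 - ql, ⟨by linarith [hqlmem.2], by linarith [hqlmem.1]⟩, ?_, ?_, ?_, ?_⟩
  · have h' := hqleq
    rw [show ql = 1 - (1 - ql) by ring, swap_Vlown urR ulR urL ulL lam rho c hdb,
      swap_Vlopp urR ulR urL ulL lam rho c hS] at h'
    exact h'
  · intro q hq heq
    have hmem : 1 - q ∈ Set.Ioo (plowStar ulL urL ulR urR lam rho c)
        (pstar ulL urL ulR urR lam rho c) := by
      rw [swap_plowStar urR ulR urL ulL lam rho c hdb, swap_pstar urR ulR urL ulL lam rho c hS]
      exact ⟨by linarith [hq.2], by linarith [hq.1]⟩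
    have heq' : Vlown ulL urL ulR urR lam rho c (1 - q)
        = Vlopp ulL urL ulR urR lam rho c (1 - q) := by
      rw [swap_Vlown urR ulR urL ulL lam rho c hdb, swap_Vlopp urR ulR urL ulL lam rho c hS]
      exact heq
    have := hqluniq (1 - q) hmem heq'
    linarith
  · intro q hq
    have hmem : 1 - q ∈ Set.Ioo ql (pstar ulL urL ulR urR lam rho c) := by
      rw [swap_pstar urR ulR urL ulL lam rho c hS]
      exact ⟨by linarith [hq.2], by linarith [hq.1]⟩
    have h' := hqlright (1 - q) hmem
    rw [swap_Vlown urR ulR urL ulL lam rho c hdb, swap_Vlopp urR ulR urL ulL lam rho c hS] at h'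
    exact h'
  · intro q hq
    have hmem : 1 - q ∈ Set.Ioo (plowStar ulL urL ulR urR lam rho c) ql := by
      rw [swap_plowStar urR ulR urL ulL lam rho c hdb]
      exact ⟨by linarith [hq.2], by linarith [hq.1]⟩
    have h' := hqlleft (1 - q) hmem
    rw [swap_Vlown urR ulR urL ulL lam rho c hdb, swap_Vlopp urR ulR urL ulL lam rho c hS] at h'
    exact h'
end
end

section
/- Characterization of the lower cost cutoff: assume ρ > 0, condition (EXP), λ·u_r^R − (ρ+λ)·u_ℓ^R − c > 0, and λ·u_ℓ^L − (ρ+λ)·u_r^L − c > 0. Then max{V̲_own(p*), V̄_own(p*)} ≥ U^S(p*) if and only if (max{(c + ρ·u_r^R)/(λ·u_r^R − (ρ+λ)·u_ℓ^R − c), (c + ρ·u_ℓ^L)/(λ·u_ℓ^L − (ρ+λ)·u_r^L − c)})^{ρ/λ} ≥ λ/(2ρ + λ). -/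
set_option linter.unusedVariables false

noncomputable section

lemma one_sub_frac (x S : ℝ) (hS : S ≠ 0) : 1 - x / S = (S - x) / S := by
  rw [sub_div, div_self hS]

lemma frac_div_frac (x y S : ℝ) (hS : S ≠ 0) : (x / S) / (y / S) = x / y := by
  rw [div_div_div_comm, div_self hS, div_one]

/-- Characterization of the lower cost cutoff via the comparison of the own-biased value
and the stationary value at the absorbing belief `p*`. -/
theorem lower_cutoff_characterization
    (urR ulR urL ulL lam rho c : ℝ)
    (h_urR : urR > max 0 ulR) (h_ulL : ulL > max 0 urL)
    (h_lam : 0 < lam) (h_rho : 0 < rho) (h_c : 0 ≤ c)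
    (h_EXP : UFA urR ulR urL ulL lam rho c (phat urR ulR urL ulL lam rho c)
      > U urR ulR urL ulL lam rho c (phat urR ulR urL ulL lam rho c))
    (h_pos1 : 0 < lam * urR - (rho + lam) * ulR - c)
    (h_pos2 : 0 < lam * ulL - (rho + lam) * urL - c) :
    max (Vlown urR ulR urL ulL lam rho c (pstar urR ulR urL ulL lam rho c))
        (Vhown urR ulR urL ulL lam rho c (pstar urR ulR urL ulL lam rho c))
      ≥ US urR ulR urL ulL lam rho c (pstar urR ulR urL ulL lam rho c)
    ↔ (max ((c + rho * urR) / (lam * urR - (rho + lam) * ulR - c))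
          ((c + rho * ulL) / (lam * ulL - (rho + lam) * urL - c))) ^ (rho / lam)
        ≥ lam / (2 * rho + lam) := by
  have hurR : 0 < urR := lt_of_le_of_lt (le_max_left 0 ulR) h_urR
  have hulL : 0 < ulL := lt_of_le_of_lt (le_max_left 0 urL) h_ulL
  have hA : 0 < urR * rho + c := by positivity
  have hB : 0 < ulL * rho + c := by positivity
  have hK1 : 0 < lam * urR - (rho + lam) * ulR - c := h_pos1
  have hK2 : 0 < lam * ulL - (rho + lam) * urL - c := h_pos2
  have hAB : 0 < (urR * rho + c) + (ulL * rho + c) := by linarith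
  have h2rl : 0 < 2 * rho + lam := by linarith
  have hlr : 0 < lam + rho := by linarith
  have hr : 0 < rho / lam := by positivity
  -- p* and 1 - p*
  have hp : pstar urR ulR urL ulL lam rho c
      = (ulL * rho + c) / ((urR * rho + c) + (ulL * rho + c)) := rfl
  have hp1 : 1 - pstar urR ulR urL ulL lam rho c
      = (urR * rho + c) / ((urR * rho + c) + (ulL * rho + c)) := by
    rw [hp, one_sub_frac _ _ hAB.ne']; congr 1; ring
  have hratio1 : (1 - pstar urR ulR urL ulL lam rho c) / pstar urR ulR urL ulL lam rho c
      = (urR * rho + c) / (ulL * rho + c) := by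
    rw [hp1, hp, frac_div_frac _ _ _ hAB.ne']
  have hratio1' : pstar urR ulR urL ulL lam rho c / (1 - pstar urR ulR urL ulL lam rho c)
      = (ulL * rho + c) / (urR * rho + c) := by
    rw [hp1, hp, frac_div_frac _ _ _ hAB.ne']
  -- plowStar ratio
  have hpl : plowStar urR ulR urL ulL lam rho c
      = (ulL * rho + c) / ((lam * urR - (rho + lam) * ulR - c) + (ulL * rho + c)) := by
    unfold plowStar; congr 1; ring
  have hSK1 : 0 < (lam * urR - (rho + lam) * ulR - c) + (ulL * rho + c) := by linarith
  have hpl1 : 1 - plowStar urR ulR urL ulL lam rho c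
      = (lam * urR - (rho + lam) * ulR - c)
        / ((lam * urR - (rho + lam) * ulR - c) + (ulL * rho + c)) := by
    rw [hpl, one_sub_frac _ _ hSK1.ne']; congr 1; ring
  have hratioL : plowStar urR ulR urL ulL lam rho c
      / (1 - plowStar urR ulR urL ulL lam rho c)
      = (ulL * rho + c) / (lam * urR - (rho + lam) * ulR - c) := by
    rw [hpl1, hpl, frac_div_frac _ _ _ hSK1.ne']
  -- phighStar ratio
  have hph : phighStar urR ulR urL ulL lam rho c
      = (lam * ulL - (rho + lam) * urL - c)
        / ((lam * ulL - (rho + lam) * urL - c) + (urR * rho + c)) := by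
    unfold phighStar; congr 1 <;> ring
  have hSK2 : 0 < (lam * ulL - (rho + lam) * urL - c) + (urR * rho + c) := by linarith
  have hph1 : 1 - phighStar urR ulR urL ulL lam rho c
      = (urR * rho + c)
        / ((lam * ulL - (rho + lam) * urL - c) + (urR * rho + c)) := by
    rw [hph, one_sub_frac _ _ hSK2.ne']; congr 1; ring
  have hratioH : (1 - phighStar urR ulR urL ulL lam rho c)
      / phighStar urR ulR urL ulL lam rho c
      = (urR * rho + c) / (lam * ulL - (rho + lam) * urL - c) := by
    rw [hph1, hph, frac_div_frac _ _ _ hSK2.ne']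
  -- combine rpow products
  have hT1 : ((ulL * rho + c) / (lam * urR - (rho + lam) * ulR - c)) ^ (rho / lam)
      * ((urR * rho + c) / (ulL * rho + c)) ^ (rho / lam)
      = ((urR * rho + c) / (lam * urR - (rho + lam) * ulR - c)) ^ (rho / lam) := by
    rw [← Real.mul_rpow (by positivity) (by positivity)]
    congr 1
    field_simp
  have hT2 : ((urR * rho + c) / (lam * ulL - (rho + lam) * urL - c)) ^ (rho / lam)
      * ((ulL * rho + c) / (urR * rho + c)) ^ (rho / lam)
      = ((ulL * rho + c) / (lam * ulL - (rho + lam) * urL - c)) ^ (rho / lam) := by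
    rw [← Real.mul_rpow (by positivity) (by positivity)]
    congr 1
    field_simp
  have hC : 0 < lam * (urR * rho + c) * (ulL * rho + c)
      / (rho * (lam + rho) * ((urR * rho + c) + (ulL * rho + c))) := by positivity
  -- key equalities
  have hVeq1 : Vlown urR ulR urL ulL lam rho c (pstar urR ulR urL ulL lam rho c)
      = US urR ulR urL ulL lam rho c (pstar urR ulR urL ulL lam rho c)
        + (lam * (urR * rho + c) * (ulL * rho + c)
            / (rho * (lam + rho) * ((urR * rho + c) + (ulL * rho + c))))
          * (((urR * rho + c) / (lam * urR - (rho + lam) * ulR - c)) ^ (rho / lam)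
              - lam / (2 * rho + lam)) := by
    rw [Vlown, US, hratioL, hratio1, mul_assoc
      (lam * (c + ulL * rho) / (rho * (lam + rho))), hT1, hp]
    generalize ((urR * rho + c) / (lam * urR - (rho + lam) * ulR - c)) ^ (rho / lam) = T
    field_simp
    ring
  have hVeq2 : Vhown urR ulR urL ulL lam rho c (pstar urR ulR urL ulL lam rho c)
      = US urR ulR urL ulL lam rho c (pstar urR ulR urL ulL lam rho c)
        + (lam * (urR * rho + c) * (ulL * rho + c)
            / (rho * (lam + rho) * ((urR * rho + c) + (ulL * rho + c))))
          * (((ulL * rho + c) / (lam * ulL - (rho + lam) * urL - c)) ^ (rho / lam)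
              - lam / (2 * rho + lam)) := by
    rw [Vhown, US, hratioH, hratio1', mul_assoc
      (lam * (c + urR * rho) / (rho * (lam + rho))), hT2, hp]
    generalize ((ulL * rho + c) / (lam * ulL - (rho + lam) * urL - c)) ^ (rho / lam) = T
    field_simp
    ring
  have hiff1 : US urR ulR urL ulL lam rho c (pstar urR ulR urL ulL lam rho c)
      ≤ Vlown urR ulR urL ulL lam rho c (pstar urR ulR urL ulL lam rho c)
      ↔ lam / (2 * rho + lam)
        ≤ ((urR * rho + c) / (lam * urR - (rho + lam) * ulR - c)) ^ (rho / lam) := by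
    rw [hVeq1, le_add_iff_nonneg_right, mul_nonneg_iff_of_pos_left hC, sub_nonneg]
  have hiff2 : US urR ulR urL ulL lam rho c (pstar urR ulR urL ulL lam rho c)
      ≤ Vhown urR ulR urL ulL lam rho c (pstar urR ulR urL ulL lam rho c)
      ↔ lam / (2 * rho + lam)
        ≤ ((ulL * rho + c) / (lam * ulL - (rho + lam) * urL - c)) ^ (rho / lam) := by
    rw [hVeq2, le_add_iff_nonneg_right, mul_nonneg_iff_of_pos_left hC, sub_nonneg]
  have hmax : (max ((c + rho * urR) / (lam * urR - (rho + lam) * ulR - c))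
          ((c + rho * ulL) / (lam * ulL - (rho + lam) * urL - c))) ^ (rho / lam)
      = max (((urR * rho + c) / (lam * urR - (rho + lam) * ulR - c)) ^ (rho / lam))
          (((ulL * rho + c) / (lam * ulL - (rho + lam) * urL - c)) ^ (rho / lam)) := by
    have e1 : (c + rho * urR) / (lam * urR - (rho + lam) * ulR - c)
        = (urR * rho + c) / (lam * urR - (rho + lam) * ulR - c) := by ring_nf
    have e2 : (c + rho * ulL) / (lam * ulL - (rho + lam) * urL - c)
        = (ulL * rho + c) / (lam * ulL - (rho + lam) * urL - c) := by ring_nf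
    rw [e1, e2]
    rcases le_total ((urR * rho + c) / (lam * urR - (rho + lam) * ulR - c))
        ((ulL * rho + c) / (lam * ulL - (rho + lam) * urL - c)) with h | h
    · rw [max_eq_right h,
        max_eq_right (Real.rpow_le_rpow (by positivity) h hr.le)]
    · rw [max_eq_left h,
        max_eq_left (Real.rpow_le_rpow (by positivity) h hr.le)]
  rw [ge_iff_le, le_max_iff, hiff1, hiff2, ge_iff_le, hmax, le_max_iff]
end
end

section
/- Comparative statics in the correct-action payoffs: assume ρ(u_ℓ^L − u_ℓ^R) + (u_r^R − u_ℓ^R)·λ > 0, ρ(u_r^R − u_r^L) + (u_ℓ^L − u_r^L)·λ > 0, 0 < p̲* < 1, and 0 < p̄* < 1. Then the partial derivative of p̲* with respect to u_r^R is strictly negative; the partial derivative of p̄* with respect to u_ℓ^L is strictly positive; and if ρ > 0 then additionally the partial derivative of p̄* with respect to u_r^R is strictly negative and the partial derivative of p̲* with respect to u_ℓ^L is strictly positive. -/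
set_option linter.unusedVariables false

noncomputable section

/-- Comparative statics in the correct-action payoffs: `∂p̲*/∂u_r^R < 0`,
`∂p̄*/∂u_ℓ^L > 0`, and if `ρ > 0` also `∂p̄*/∂u_r^R < 0` and `∂p̲*/∂u_ℓ^L > 0`. -/
theorem comparative_statics_correct_payoffs
    (urR ulR urL ulL lam rho c : ℝ)
    (h_urR : urR > max 0 ulR) (h_ulL : ulL > max 0 urL)
    (h_lam : 0 < lam) (h_rho : 0 ≤ rho) (h_c : 0 ≤ c)
    (h_nz : rho ≠ 0 ∨ c ≠ 0)
    (h_den1 : 0 < rho * (ulL - ulR) + (urR - ulR) * lam)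
    (h_den2 : 0 < rho * (urR - urL) + (ulL - urL) * lam)
    (h_plow : 0 < plowStar urR ulR urL ulL lam rho c
      ∧ plowStar urR ulR urL ulL lam rho c < 1)
    (h_phigh : 0 < phighStar urR ulR urL ulL lam rho c
      ∧ phighStar urR ulR urL ulL lam rho c < 1) :
    deriv (fun x : ℝ => plowStar x ulR urL ulL lam rho c) urR < 0
    ∧ 0 < deriv (fun y : ℝ => phighStar urR ulR urL y lam rho c) ulL
    ∧ (0 < rho →
        deriv (fun x : ℝ => phighStar x ulR urL ulL lam rho c) urR < 0
        ∧ 0 < deriv (fun y : ℝ => plowStar urR ulR urL y lam rho c) ulL) := by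
  have hD1 := h_den1
  have hD2 := h_den2
  set N1 : ℝ := ulL * rho + c with hN1def
  set D1 : ℝ := rho * (ulL - ulR) + (urR - ulR) * lam with hD1def
  set N2 : ℝ := (ulL - urL) * lam - urL * rho - c with hN2def
  set D2 : ℝ := rho * (urR - urL) + (ulL - urL) * lam with hD2def
  have hplowval : plowStar urR ulR urL ulL lam rho c = N1 / D1 := rfl
  have hphighval : phighStar urR ulR urL ulL lam rho c = N2 / D2 := rfl
  have hN1pos : 0 < N1 := by
    have h := h_plow.1; rw [hplowval] at h
    exact (div_pos_iff.mp h).elim (fun h => h.1) (fun h => absurd h.2 (not_lt.mpr hD1.le))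
  have hN2pos : 0 < N2 := by
    have h := h_phigh.1; rw [hphighval] at h
    exact (div_pos_iff.mp h).elim (fun h => h.1) (fun h => absurd h.2 (not_lt.mpr hD2.le))
  have hN1lt : N1 < D1 := by
    have h := h_plow.2; rw [hplowval] at h
    exact (div_lt_one hD1).mp h
  have hN2lt : N2 < D2 := by
    have h := h_phigh.2; rw [hphighval] at h
    exact (div_lt_one hD2).mp h
  -- derivative 1 : plowStar in urR
  have hd1 : HasDerivAt (fun x : ℝ => plowStar x ulR urL ulL lam rho c)
      ((0 * D1 - N1 * lam) / D1 ^ 2) urR := by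
    have hden : HasDerivAt (fun x : ℝ => rho * (ulL - ulR) + (x - ulR) * lam) lam urR := by
      simpa using (((hasDerivAt_id urR).sub_const ulR).mul_const lam).const_add (rho * (ulL - ulR))
    exact (hasDerivAt_const urR N1).div hden (ne_of_gt hD1)
  -- derivative 2 : phighStar in ulL
  have hd2 : HasDerivAt (fun y : ℝ => phighStar urR ulR urL y lam rho c)
      ((lam * D2 - N2 * lam) / D2 ^ 2) ulL := by
    have hnum : HasDerivAt (fun y : ℝ => (y - urL) * lam - urL * rho - c) lam ulL := by
      simpa using ((((hasDerivAt_id ulL).sub_const urL).mul_const lam).sub_const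
        (urL * rho)).sub_const c
    have hden : HasDerivAt (fun y : ℝ => rho * (urR - urL) + (y - urL) * lam) lam ulL := by
      simpa using (((hasDerivAt_id ulL).sub_const urL).mul_const lam).const_add (rho * (urR - urL))
    exact hnum.div hden (ne_of_gt hD2)
  -- derivative 3 : phighStar in urR
  have hd3 : HasDerivAt (fun x : ℝ => phighStar x ulR urL ulL lam rho c)
      ((0 * D2 - N2 * rho) / D2 ^ 2) urR := by
    have hden : HasDerivAt (fun x : ℝ => rho * (x - urL) + (ulL - urL) * lam) rho urR := by
      simpa using ((((hasDerivAt_id urR).sub_const urL).const_mul rho).add_const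
        ((ulL - urL) * lam))
    exact (hasDerivAt_const urR N2).div hden (ne_of_gt hD2)
  -- derivative 4 : plowStar in ulL
  have hd4 : HasDerivAt (fun y : ℝ => plowStar urR ulR urL y lam rho c)
      ((rho * D1 - N1 * rho) / D1 ^ 2) ulL := by
    have hnum : HasDerivAt (fun y : ℝ => y * rho + c) rho ulL := by
      simpa using ((hasDerivAt_id ulL).mul_const rho).add_const c
    have hden : HasDerivAt (fun y : ℝ => rho * (y - ulR) + (urR - ulR) * lam) rho ulL := by
      simpa using (((hasDerivAt_id ulL).sub_const ulR).const_mul rho).add_const ((urR - ulR) * lam)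
    exact hnum.div hden (ne_of_gt hD1)
  have hD1sq : 0 < D1 ^ 2 := pow_pos hD1 2
  have hD2sq : 0 < D2 ^ 2 := pow_pos hD2 2
  refine ⟨?_, ?_, fun hrho => ⟨?_, ?_⟩⟩
  · rw [hd1.deriv]
    apply div_neg_of_neg_of_pos _ hD1sq
    nlinarith
  · rw [hd2.deriv]
    apply div_pos _ hD2sq
    nlinarith
  · rw [hd3.deriv]
    apply div_neg_of_neg_of_pos _ hD2sq
    nlinarith
  · rw [hd4.deriv]
    apply div_pos _ hD1sq
    nlinarith
end
end

section
/- Optimality of conclusive Poisson experiments (discrete-time foundation): let d ∈ (0,1), p ∈ (0,1), and let W : [0,1] → ℝ be convex on [0,1]. For a ∈ [d, 1] define the posteriors q_R(a) = p·(d + 1 − a)/(p·d + 1 − a) and q_L(a) = p·(a − d)/(a − p·d), and the expected continuation value G(a) = (p·d + 1 − a)·W(q_R(a)) + (a − p·d)·W(q_L(a)). Then for every a ∈ [d, 1], G(a) ≤ max{G(d), G(1)}; that is, the maximum of G over [d,1] is attained at a = d or at a = 1. -/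
noncomputable section

set_option maxHeartbeats 2000000 in
/-- Optimality of conclusive Poisson experiments: for a convex continuation value `W`,
the expected continuation value `G(a)` of the binary experiment with `L`-signal
probability `a` (and `R`-signal probability `b = 1 + d − a`) is maximized over
`a ∈ [d, 1]` at one of the extreme (conclusive) experiments `a = d` or `a = 1`. -/
theorem conclusive_experiments_optimal
    (d p : ℝ) (hd : d ∈ Set.Ioo (0 : ℝ) 1) (hp : p ∈ Set.Ioo (0 : ℝ) 1)
    (W : ℝ → ℝ) (hW : ConvexOn ℝ (Set.Icc (0 : ℝ) 1) W)
    (qR qL G : ℝ → ℝ)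
    (hqR : ∀ a, qR a = p * (d + 1 - a) / (p * d + 1 - a))
    (hqL : ∀ a, qL a = p * (a - d) / (a - p * d))
    (hG : ∀ a, G a = (p * d + 1 - a) * W (qR a) + (a - p * d) * W (qL a)) :
    ∀ a ∈ Set.Icc d 1, G a ≤ max (G d) (G 1) := by
  obtain ⟨hd0, hd1⟩ := hd
  obtain ⟨hp0, hp1⟩ := hp
  rintro a ⟨had, ha1⟩
  have hpd : 0 < p * d := by positivity
  have hpd1 : p * d < d := by nlinarith
  have h1 : (0:ℝ) < p * d + 1 - a := by nlinarith
  have h2 : (0:ℝ) < a - p * d := by nlinarith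
  have h1d : (0:ℝ) < p * d + 1 - d := by nlinarith
  have h2d : (0:ℝ) < d - p * d := by nlinarith
  have h21 : (0:ℝ) < 1 - p * d := by nlinarith
  have hdd : (0:ℝ) < 1 - d := by linarith
  -- endpoint values
  have hqRd : qR d = p / (p * d + 1 - d) := by rw [hqR]; ring_nf
  have hqR1 : qR 1 = 1 := by
    rw [hqR]
    have : p * (d + 1 - 1) = p * d := by ring
    rw [this]
    have : p * d + 1 - 1 = p * d := by ring
    rw [this, div_self (ne_of_gt hpd)]
  have hqLd : qL d = 0 := by rw [hqL]; simp
  have hqL1 : qL 1 = p * (1 - d) / (1 - p * d) := by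
    rw [hqL]
  -- endpoint memberships
  have mRd : qR d ∈ Set.Icc (0:ℝ) 1 := by
    rw [hqRd]
    constructor
    · positivity
    · rw [div_le_one h1d]; nlinarith
  have mR1 : qR 1 ∈ Set.Icc (0:ℝ) 1 := by rw [hqR1]; exact ⟨by norm_num, le_refl 1⟩
  have mLd : qL d ∈ Set.Icc (0:ℝ) 1 := by rw [hqLd]; exact ⟨le_refl 0, by norm_num⟩
  have mL1 : qL 1 ∈ Set.Icc (0:ℝ) 1 := by
    rw [hqL1]
    constructor
    · positivity
    · rw [div_le_one h21]; nlinarith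
  -- weights for the R-signal term
  set α₁ : ℝ := (1 - a) * (p * d + 1 - d) / ((1 - d) * (p * d + 1 - a)) with hα₁
  set β₁ : ℝ := (a - d) * (p * d) / ((1 - d) * (p * d + 1 - a)) with hβ₁
  have hα₁0 : 0 ≤ α₁ := by
    apply div_nonneg
    · nlinarith
    · positivity
  have hβ₁0 : 0 ≤ β₁ := by
    apply div_nonneg
    · nlinarith
    · positivity
  have hsum₁ : α₁ + β₁ = 1 := by
    rw [hα₁, hβ₁]
    field_simp
    ring
  have hcomb₁ : α₁ • qR d + β₁ • qR 1 = qR a := by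
    rw [smul_eq_mul, smul_eq_mul, hα₁, hβ₁, hqRd, hqR1, hqR]
    field_simp
    ring
  have key₁ : W (qR a) ≤ α₁ * W (qR d) + β₁ * W (qR 1) := by
    have := hW.2 mRd mR1 hα₁0 hβ₁0 hsum₁
    rw [hcomb₁] at this
    simpa using this
  -- weights for the L-signal term
  set α₂ : ℝ := (1 - a) * (d - p * d) / ((1 - d) * (a - p * d)) with hα₂
  set β₂ : ℝ := (a - d) * (1 - p * d) / ((1 - d) * (a - p * d)) with hβ₂
  have hα₂0 : 0 ≤ α₂ := by
    apply div_nonneg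
    · nlinarith
    · positivity
  have hβ₂0 : 0 ≤ β₂ := by
    apply div_nonneg
    · nlinarith
    · positivity
  have hsum₂ : α₂ + β₂ = 1 := by
    rw [hα₂, hβ₂]
    rw [← add_div, div_eq_one_iff_eq (by positivity)]; ring
  have hcomb₂ : α₂ • qL d + β₂ • qL 1 = qL a := by
    rw [smul_eq_mul, smul_eq_mul, hα₂, hβ₂, hqLd, hqL1, hqL]
    rw [mul_zero, zero_add, div_mul_div_comm, div_eq_div_iff (by positivity) h2.ne']; ring
  have key₂ : W (qL a) ≤ α₂ * W (qL d) + β₂ * W (qL 1) := by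
    have := hW.2 mLd mL1 hα₂0 hβ₂0 hsum₂
    rw [hcomb₂] at this
    simpa using this
  -- combine into G(a) ≤ λ G(d) + (1-λ) G(1)
  have hGd : G d = (p * d + 1 - d) * W (qR d) + (d - p * d) * W (qL d) := by
    rw [hG]
  have hG1 : G 1 = (p * d) * W (qR 1) + (1 - p * d) * W (qL 1) := by
    rw [hG]; ring_nf
  have hconv : G a ≤ ((1 - a) / (1 - d)) * G d + ((a - d) / (1 - d)) * G 1 := by
    rw [hG a, hGd, hG1]
    have e1 : (p * d + 1 - a) * W (qR a)
        ≤ (p * d + 1 - a) * (α₁ * W (qR d) + β₁ * W (qR 1)) :=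
      mul_le_mul_of_nonneg_left key₁ (le_of_lt h1)
    have e2 : (a - p * d) * W (qL a)
        ≤ (a - p * d) * (α₂ * W (qL d) + β₂ * W (qL 1)) :=
      mul_le_mul_of_nonneg_left key₂ (le_of_lt h2)
    have c1 : (p * d + 1 - a) * α₁ = (1 - a) / (1 - d) * (p * d + 1 - d) := by
      rw [hα₁]; field_simp
    have c2 : (p * d + 1 - a) * β₁ = (a - d) / (1 - d) * (p * d) := by
      rw [hβ₁]; field_simp
    have c3 : (a - p * d) * α₂ = (1 - a) / (1 - d) * (d - p * d) := by
      rw [hα₂]; field_simp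
    have c4 : (a - p * d) * β₂ = (a - d) / (1 - d) * (1 - p * d) := by
      rw [hβ₂]; field_simp
    have e3 : (p * d + 1 - a) * (α₁ * W (qR d) + β₁ * W (qR 1))
        + (a - p * d) * (α₂ * W (qL d) + β₂ * W (qL 1))
        = (1 - a) / (1 - d) * ((p * d + 1 - d) * W (qR d) + (d - p * d) * W (qL d))
        + (a - d) / (1 - d) * (p * d * W (qR 1) + (1 - p * d) * W (qL 1)) := by
      linear_combination W (qR d) * c1 + W (qR 1) * c2 + W (qL d) * c3 + W (qL 1) * c4
    linarith
  have hl0 : 0 ≤ (1 - a) / (1 - d) := by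
    apply div_nonneg <;> linarith
  have hl1 : 0 ≤ (a - d) / (1 - d) := by
    apply div_nonneg <;> linarith
  have hls : (1 - a) / (1 - d) + (a - d) / (1 - d) = 1 := by
    field_simp
    ring
  have hm1 : G d ≤ max (G d) (G 1) := le_max_left _ _
  have hm2 : G 1 ≤ max (G d) (G 1) := le_max_right _ _
  calc G a ≤ ((1 - a) / (1 - d)) * G d + ((a - d) / (1 - d)) * G 1 := hconv
    _ ≤ ((1 - a) / (1 - d)) * max (G d) (G 1) + ((a - d) / (1 - d)) * max (G d) (G 1) := by
        gcongr
    _ = max (G d) (G 1) := by rw [← add_mul, hls, one_mul]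
end
end
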